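/- arXiv:2508.21683 — 7 statements merged into one kernel-verified Lean document; each statement's English description precedes it below -/
import Mathlib

section
/- The sum over n ≥ 0 of C_n / 4^n equals 2, where C_n = (1/(n+1)) * binom(2n, n) is the n-th Catalan number. -/
open Filter Topology Finset

lemma centralBinom_sq_mul_le (n : ℕ) :
    Nat.centralBinom n ^ 2 * (2 * n + 1) ≤ 16 ^ n := by
  induction n with
  | zero => simp [Nat.centralBinom]
  | succ n ih =>
      have key : (n + 1) * Nat.centralBinom (n + 1) =
          2 * (2 * n + 1) * Nat.centralBinom n := Nat.succ_mul_centralBinom_succ n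
      have h1 : (Nat.centralBinom (n + 1) ^ 2 * (2 * (n + 1) + 1)) * (n + 1) ^ 2
          ≤ 16 ^ (n + 1) * (n + 1) ^ 2 := by
        have : (Nat.centralBinom (n + 1) ^ 2 * (2 * (n + 1) + 1)) * (n + 1) ^ 2
            = (2 * (2 * n + 1) * Nat.centralBinom n) ^ 2 * (2 * (n + 1) + 1) := by
          rw [show (Nat.centralBinom (n + 1) ^ 2 * (2 * (n + 1) + 1)) * (n + 1) ^ 2
              = ((n + 1) * Nat.centralBinom (n + 1)) ^ 2 * (2 * (n + 1) + 1) by ring, key]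
        rw [this]
        have h2 : (2 * (2 * n + 1) * Nat.centralBinom n) ^ 2 * (2 * (n + 1) + 1)
            = (Nat.centralBinom n ^ 2 * (2 * n + 1)) * (4 * ((2 * n + 1) * (2 * n + 3))) := by
          ring
        rw [h2]
        calc (Nat.centralBinom n ^ 2 * (2 * n + 1)) * (4 * ((2 * n + 1) * (2 * n + 3)))
            ≤ 16 ^ n * (4 * ((2 * n + 1) * (2 * n + 3))) := by
              exact Nat.mul_le_mul_right _ ih
          _ ≤ 16 ^ n * (16 * (n + 1) ^ 2) := by
              apply Nat.mul_le_mul_left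
              nlinarith
          _ = 16 ^ (n + 1) * (n + 1) ^ 2 := by ring
      exact Nat.le_of_mul_le_mul_right h1 (by positivity)

lemma partial_sum_catalan (n : ℕ) :
    ∑ k ∈ Finset.range n, (catalan k : ℝ) / 4 ^ k
      = 2 - 2 * (Nat.centralBinom n : ℝ) / 4 ^ n := by
  induction n with
  | zero => simp [Nat.centralBinom]
  | succ n ih =>
      rw [Finset.sum_range_succ, ih]
      have key : ((n : ℝ) + 1) * Nat.centralBinom (n + 1)
          = 2 * (2 * n + 1) * Nat.centralBinom n := by
        exact_mod_cast Nat.succ_mul_centralBinom_succ n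
      have kc : ((n : ℝ) + 1) * catalan n = Nat.centralBinom n := by
        exact_mod_cast succ_mul_catalan_eq_centralBinom n
      have h4 : (4 : ℝ) ^ n ≠ 0 := by positivity
      have hn1 : ((n : ℝ) + 1) ≠ 0 := by positivity
      have hB : ((n : ℝ) + 1) * (2 * (Nat.centralBinom (n + 1) : ℝ))
          = ((n : ℝ) + 1) * (8 * (Nat.centralBinom n : ℝ) - 4 * (catalan n : ℝ)) := by
        linear_combination 2 * key + 4 * kc
      have hB2 := mul_left_cancel₀ hn1 hB
      field_simp [pow_succ]
      linear_combination (4:ℝ) ^ n * hB2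

lemma tendsto_centralBinom_div : Tendsto (fun n : ℕ => (Nat.centralBinom n : ℝ) / 4 ^ n)
    atTop (𝓝 0) := by
  have hsq : Tendsto (fun n : ℕ => ((Nat.centralBinom n : ℝ) / 4 ^ n) ^ 2) atTop (𝓝 0) := by
    apply squeeze_zero (fun n => by positivity) (g := fun n : ℕ => 1 / (2 * n + 1))
    · intro n
      have h := centralBinom_sq_mul_le n
      have hR : (Nat.centralBinom n : ℝ) ^ 2 * (2 * n + 1) ≤ 16 ^ n := by exact_mod_cast h
      have h16 : (16 : ℝ) ^ n = ((4 : ℝ) ^ n) ^ 2 := by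
        rw [← pow_mul, mul_comm, pow_mul]; norm_num
      rw [div_pow, div_le_div_iff₀ (by positivity) (by positivity)]
      calc (Nat.centralBinom n : ℝ) ^ 2 * (2 * n + 1) ≤ 16 ^ n := hR
        _ = 1 * ((4:ℝ) ^ n) ^ 2 := by rw [h16, one_mul]

    · have : Tendsto (fun n : ℕ => 2 * (n : ℝ) + 1) atTop atTop := by
        apply Filter.Tendsto.atTop_add _ tendsto_const_nhds
        exact (tendsto_natCast_atTop_atTop).const_mul_atTop (by norm_num)
      simpa [one_div, Pi.inv_def] using this.inv_tendsto_atTop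
  have hnn : ∀ n : ℕ, (0:ℝ) ≤ (Nat.centralBinom n : ℝ) / 4 ^ n := fun n => by positivity
  have := (Real.continuous_sqrt.tendsto 0).comp hsq
  simp only [Real.sqrt_zero, Function.comp_def] at this
  convert this using 2 with n
  rw [Real.sqrt_sq (hnn n)]

/-- The sum over `n ≥ 0` of `C_n / 4^n` equals `2`, where `C_n` is the `n`-th
Catalan number. -/
theorem catalan_tsum_div_four_pow : ∑' n : ℕ, (catalan n : ℝ) / 4 ^ n = 2 := by
  have hs : HasSum (fun n : ℕ => (catalan n : ℝ) / 4 ^ n) 2 := by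
    rw [hasSum_iff_tendsto_nat_of_nonneg (fun n => by positivity)]
    simp only [partial_sum_catalan]
    have : Tendsto (fun n : ℕ => 2 - 2 * (Nat.centralBinom n : ℝ) / 4 ^ n) atTop
        (𝓝 (2 - 2 * 0)) := by
      apply Tendsto.sub tendsto_const_nhds
      simpa [mul_div_assoc] using tendsto_centralBinom_div.const_mul 2
    simpa using this
  exact hs.tsum_eq
end

section
/- For every positive integer m, the alternating sum ∑_{i=0}^{m-1} (-1)^i * binom(m-i-1, i) * C_{m-i-1} equals 1, where C_k is the k-th Catalan number. -/
open Finset PowerSeries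

private def aa (k : ℕ) : ℤ :=
  ∑ j ∈ Finset.range (k + 1), (-1 : ℤ) ^ (k - j) * (Nat.choose j (k - j)) * catalan j

private lemma coeff_term (j b m : ℕ) :
    (PowerSeries.coeff (R := ℤ) m) ((-X : ℤ⟦X⟧) ^ b * 1 ^ (j - b) * (↑(j.choose b) : ℤ⟦X⟧))
      = if m = b then (-1 : ℤ) ^ b * (j.choose b) else 0 := by
  rw [one_pow, mul_one, neg_pow,
    show ((-1 : ℤ⟦X⟧)) = PowerSeries.C (R := ℤ) (-1) by simp, ← map_pow,
    show ((j.choose b : ℤ⟦X⟧)) = PowerSeries.C (R := ℤ) (j.choose b) by simp [map_natCast],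
    mul_comm ((PowerSeries.C (R := ℤ)) ((-1:ℤ) ^ b) * X ^ b), ← mul_assoc, ← map_mul,
    PowerSeries.coeff_C_mul, coeff_X_pow]
  split_ifs with h
  · ring
  · ring

private lemma coeff_pow_one_sub (j m : ℕ) :
    (PowerSeries.coeff (R := ℤ) m) (((1 : ℤ⟦X⟧) - X) ^ j) = (-1 : ℤ) ^ m * (j.choose m) := by
  rw [sub_eq_neg_add, add_pow, map_sum]
  rw [Finset.sum_congr rfl fun b _ => coeff_term j b m]
  rw [Finset.sum_ite_eq (Finset.range (j+1)) m fun b => (-1 : ℤ) ^ b * (j.choose b)]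
  split_ifs with h
  · rfl
  · simp only [Finset.mem_range, not_lt] at h
    rw [Nat.choose_eq_zero_of_lt (by omega)]
    ring

private lemma coeff_u_pow (j k : ℕ) :
    (PowerSeries.coeff (R := ℤ) k) (((X : ℤ⟦X⟧) * (1 - X)) ^ j)
      = if j ≤ k then (-1 : ℤ) ^ (k - j) * (j.choose (k - j)) else 0 := by
  rw [mul_pow, PowerSeries.coeff_X_pow_mul']
  split_ifs with h
  · rw [coeff_pow_one_sub]
  · rfl

private lemma quad {R : Type*} [CommRing R] (c : ℕ → R)
    (hc : ∀ s, c (s + 1) = ∑ p ∈ Finset.HasAntidiagonal.antidiagonal s, c p.1 * c p.2)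
    (u : R) (n : ℕ) :
    ∃ r : R, (∑ j ∈ range (n + 1), c j * u ^ j) ^ 2
      = (∑ s ∈ range n, c (s + 1) * u ^ s) + u ^ n * r := by
  have hS : (∑ j ∈ range (n + 1), c j * u ^ j) ^ 2
      = ∑ p ∈ range (n + 1) ×ˢ range (n + 1), c p.1 * c p.2 * u ^ (p.1 + p.2) := by
    rw [sq, Finset.sum_mul_sum, Finset.sum_product]
    exact Finset.sum_congr rfl fun j _ => Finset.sum_congr rfl fun k _ => by
      rw [pow_add]; ring
  set B := range (n + 1) ×ˢ range (n + 1) with hB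
  rw [hS, ← Finset.sum_filter_add_sum_filter_not B (fun p => p.1 + p.2 < n)]
  have h1 : (B.filter fun p => p.1 + p.2 < n) = (range n).biUnion Finset.HasAntidiagonal.antidiagonal := by
    ext p
    simp only [Finset.mem_filter, hB, Finset.mem_product, Finset.mem_range,
      Finset.mem_biUnion, Finset.HasAntidiagonal.mem_antidiagonal]
    constructor
    · rintro ⟨⟨_, _⟩, h⟩; exact ⟨p.1 + p.2, h, rfl⟩
    · rintro ⟨s, hs, h⟩; omega
  have h2 : ∑ p ∈ (B.filter fun p => p.1 + p.2 < n), c p.1 * c p.2 * u ^ (p.1 + p.2)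
      = ∑ s ∈ range n, c (s + 1) * u ^ s := by
    rw [h1, Finset.sum_biUnion]
    · refine Finset.sum_congr rfl fun s _ => ?_
      rw [hc s, Finset.sum_mul]
      refine Finset.sum_congr rfl fun p hp => ?_
      rw [Finset.HasAntidiagonal.mem_antidiagonal] at hp
      rw [hp]
    · intro s hs t ht hst
      refine Finset.disjoint_left.2 fun p hp hp' => hst ?_
      rw [Finset.HasAntidiagonal.mem_antidiagonal] at hp hp'
      omega
  refine ⟨∑ p ∈ (B.filter fun p => ¬ p.1 + p.2 < n), c p.1 * c p.2 * u ^ (p.1 + p.2 - n), ?_⟩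
  rw [h2, Finset.mul_sum]
  congr 1
  refine Finset.sum_congr rfl fun p hp => ?_
  rw [Finset.mem_filter] at hp
  rw [show u ^ (p.1 + p.2) = u ^ n * u ^ (p.1 + p.2 - n) by
    rw [← pow_add]; congr 1; omega]
  ring

private lemma aa_step (n : ℕ) : aa 0 = 1 ∧ ∀ k, 1 ≤ k → k ≤ n → aa k = aa (k - 1) := by
  classical
  set u : ℤ⟦X⟧ := X * (1 - X) with hu
  set c : ℕ → ℤ⟦X⟧ := fun j => ((catalan j : ℤ) : ℤ⟦X⟧) with hcdef
  have hc : ∀ s, c (s + 1) = ∑ p ∈ Finset.HasAntidiagonal.antidiagonal s, c p.1 * c p.2 := by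
    intro s
    simp only [hcdef]
    rw [catalan_succ']
    push_cast
    rfl
  set P : ℤ⟦X⟧ := ∑ j ∈ range (n + 1), c j * u ^ j with hP
  -- coefficients of P
  have hcoeffP : ∀ k, k ≤ n → (PowerSeries.coeff (R := ℤ) k) P = aa k := by
    intro k hk
    rw [hP, map_sum]
    have : ∀ j ∈ range (n + 1), (PowerSeries.coeff (R := ℤ) k) (c j * u ^ j)
        = if j ≤ k then (-1 : ℤ) ^ (k - j) * (j.choose (k - j)) * catalan j else 0 := by
      intro j _
      rw [hcdef]
      simp only
      rw [show ((catalan j : ℤ) : ℤ⟦X⟧) = PowerSeries.C (R := ℤ) (catalan j : ℤ) from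
        (map_intCast (PowerSeries.C (R := ℤ)) _).symm, PowerSeries.coeff_C_mul, hu, coeff_u_pow]
      split_ifs with h
      · ring
      · ring
    rw [Finset.sum_congr rfl this, Finset.sum_ite, Finset.sum_const_zero, add_zero]
    rw [aa]
    apply Finset.sum_nbij' (fun j => j) (fun j => j)
    · intro j hj
      simp only [Finset.mem_filter, Finset.mem_range] at hj
      simp only [Finset.mem_range]
      omega
    · intro j hj
      simp only [Finset.mem_range] at hj
      simp only [Finset.mem_filter, Finset.mem_range]
      omega
    · intro j _; rfl
    · intro j _; rfl
    · intro j _; rfl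
  -- quadratic relation
  obtain ⟨r, hr⟩ := quad c hc u n
  have hQ : P = 1 + u * ∑ s ∈ range n, c (s + 1) * u ^ s := by
    rw [hP, Finset.sum_range_succ', Finset.mul_sum,
      show c 0 * u ^ 0 = 1 by simp [hcdef], add_comm]
    congr 1
    refine Finset.sum_congr rfl fun i _ => ?_
    rw [pow_succ]
    ring
  have hfact : ((1 - X) * P - 1) * (X * P - 1) = X ^ (n + 1) * ((1 - X) ^ (n + 1) * r) := by
    have : ((1 - X) * P - 1) * (X * P - 1) = u * P ^ 2 - P + 1 := by
      rw [hu]; ring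
    rw [this, hr, hQ]
    rw [show (X ^ (n+1) * ((1 - X) ^ (n+1) * r) : ℤ⟦X⟧) = u ^ (n+1) * r by
      rw [hu, mul_pow]; ring]
    ring_nf
  -- X * P - 1 is a unit
  have hunit : IsUnit ((X : ℤ⟦X⟧) * P - 1) := by
    rw [PowerSeries.isUnit_iff_constantCoeff]
    simp
  obtain ⟨w, hw⟩ := hunit
  set V : ℤ⟦X⟧ := ((w⁻¹ : ℤ⟦X⟧ˣ) : ℤ⟦X⟧) with hV
  have hval : ((X : ℤ⟦X⟧) * P - 1) * V = 1 := by
    rw [hV, ← hw, ← Units.val_mul]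
    simp
  have hFdvd : (1 - X) * P - 1 = X ^ (n + 1) * ((1 - X) ^ (n + 1) * r * V) := by
    calc (1 - X) * P - 1 = ((1 - X) * P - 1) * (((X : ℤ⟦X⟧) * P - 1) * V) := by
          rw [hval, mul_one]
      _ = (((1 - X) * P - 1) * (X * P - 1)) * V := by ring
      _ = X ^ (n + 1) * ((1 - X) ^ (n + 1) * r * V) := by rw [hfact]; ring
  have hcoeffF : ∀ k, k ≤ n → (PowerSeries.coeff (R := ℤ) k) ((1 - X) * P - 1) = 0 := by
    intro k hk
    rw [hFdvd, PowerSeries.coeff_X_pow_mul', if_neg (by omega)]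
  constructor
  · have := hcoeffF 0 (Nat.zero_le n)
    rw [map_sub, sub_mul, one_mul, map_sub] at this
    rw [show (PowerSeries.coeff (R := ℤ) 0) ((X : ℤ⟦X⟧) * P) = 0 by
      rw [show ((X : ℤ⟦X⟧) * P) = P * X ^ 1 by ring, PowerSeries.coeff_mul_X_pow', if_neg (by omega)]] at this
    rw [hcoeffP 0 (Nat.zero_le n)] at this
    have h0 : (PowerSeries.coeff (R := ℤ) 0) (1 : ℤ⟦X⟧) = 1 := by simp
    rw [h0] at this
    omega
  · intro k hk1 hkn
    have := hcoeffF k hkn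
    rw [map_sub, sub_mul, one_mul, map_sub] at this
    rw [show (PowerSeries.coeff (R := ℤ) k) ((X : ℤ⟦X⟧) * P) = (PowerSeries.coeff (R := ℤ) (k - 1)) P by
      rw [show ((X : ℤ⟦X⟧) * P) = P * X ^ 1 by ring, PowerSeries.coeff_mul_X_pow', if_pos (by omega)]] at this
    rw [hcoeffP k hkn, hcoeffP (k - 1) (by omega)] at this
    have h1 : (PowerSeries.coeff (R := ℤ) k) (1 : ℤ⟦X⟧) = 0 := by
      rw [PowerSeries.coeff_one, if_neg (by omega)]
    rw [h1] at this
    omega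

private lemma aa_eq_one (k : ℕ) : aa k = 1 := by
  induction k with
  | zero => exact (aa_step 0).1
  | succ k ih =>
    have := (aa_step (k + 1)).2 (k + 1) (by omega) le_rfl
    simpa [this] using ih

/-- For every positive integer `m`,
`∑_{i=0}^{m-1} (-1)^i * binom(m-i-1, i) * C_{m-i-1} = 1`,
where `C_k` is the `k`-th Catalan number (and `binom(a,b) = 0` when `b > a`). -/
theorem alternating_catalan_sum_eq_one (m : ℕ) (hm : 1 ≤ m) :
    ∑ i ∈ Finset.range m,
      (-1 : ℤ) ^ i * (Nat.choose (m - i - 1) i) * (catalan (m - i - 1)) = 1 := by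
  have hrefl := Finset.sum_range_reflect
    (fun i => (-1 : ℤ) ^ i * (Nat.choose (m - i - 1) i) * (catalan (m - i - 1))) m
  rw [← hrefl]
  have : ∀ j ∈ Finset.range m,
      (-1 : ℤ) ^ (m - 1 - j) * (Nat.choose (m - (m - 1 - j) - 1) (m - 1 - j))
        * (catalan (m - (m - 1 - j) - 1))
      = (-1 : ℤ) ^ (m - 1 - j) * (Nat.choose j (m - 1 - j)) * (catalan j) := by
    intro j hj
    rw [Finset.mem_range] at hj
    rw [show m - (m - 1 - j) - 1 = j by omega]
  rw [Finset.sum_congr rfl this]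
  have := aa_eq_one (m - 1)
  rw [aa, show m - 1 + 1 = m by omega] at this
  exact this
end

section
/- For every even integer r ≥ 2, the maximum value of T_r on [0,1] is r²/(2r² − 2). -/
/-- Distance from `x` to the nearest integer. -/
noncomputable def distInt (x : ℝ) : ℝ := |x - round x|

/-- The Takagi–van der Waerden function `T_r`. -/
noncomputable def takagi (r : ℕ) (x : ℝ) : ℝ :=
  ∑' n : ℕ, distInt ((r : ℝ) ^ n * x) / (r : ℝ) ^ n

lemma distInt_nonneg (x : ℝ) : 0 ≤ distInt x := abs_nonneg _

lemma distInt_le_half (x : ℝ) : distInt x ≤ 1 / 2 := abs_sub_round x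

lemma distInt_le (x : ℝ) (n : ℤ) : distInt x ≤ |x - n| := by
  rcases le_or_gt (1 / 2) |x - n| with h | h
  · exact (abs_sub_round x).trans h
  · have hn : round x = n := by
      rw [round_eq, Int.floor_eq_iff]
      rw [abs_lt] at h
      constructor <;> push_cast <;> linarith
    rw [distInt, hn]

lemma distInt_int_add (m : ℤ) (x : ℝ) : distInt (x + m) = distInt x := by
  rw [distInt, distInt, round_add_intCast]
  push_cast
  ring_nf

lemma distInt_neg (x : ℝ) : distInt (-x) = distInt x := by
  apply le_antisymm
  · calc distInt (-x) ≤ |(-x) - (-round x : ℤ)| := distInt_le _ _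
      _ = |x - round x| := by push_cast; rw [← abs_neg]; ring_nf
      _ = distInt x := rfl
  · calc distInt x ≤ |x - (-round (-x) : ℤ)| := distInt_le _ _
      _ = |(-x) - round (-x)| := by push_cast; rw [← abs_neg]; ring_nf
      _ = distInt (-x) := rfl

lemma distInt_of_small {x : ℝ} (h0 : 0 ≤ x) (h1 : x < 1 / 2) : distInt x = x := by
  have : round x = 0 := by
    rw [round_eq_zero_iff]
    constructor <;> [linarith; exact h1]
  rw [distInt, this]
  simpa using abs_of_nonneg h0

/-- The key inequality: for even `r`, `distInt (r * y) ≤ r/2 - r * distInt y`. -/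
lemma key_ineq (r : ℕ) (hre : Even r) (y : ℝ) :
    distInt ((r : ℝ) * y) ≤ (r : ℝ) / 2 - r * distInt y := by
  obtain ⟨k, hk⟩ := hre
  have hk' : (r : ℝ) = 2 * k := by rw [hk]; push_cast; ring
  set m := round y with hm
  set t := y - m with ht
  have habs : |t| ≤ 1 / 2 := abs_sub_round y
  have hdy : distInt y = |t| := rfl
  have hy : y = m + t := by rw [ht]; ring
  rcases le_or_gt 0 t with h | h
  · have := distInt_le ((r : ℝ) * y) (r * m + k)
    calc distInt ((r : ℝ) * y) ≤ |(r : ℝ) * y - (r * m + k : ℤ)| := this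
      _ = |(r : ℝ) * t - r / 2| := by push_cast; rw [hy, hk']; ring_nf
      _ = (r : ℝ) / 2 - r * t := by
          rw [abs_of_nonpos] <;> nlinarith [abs_le.1 habs]
      _ = (r : ℝ) / 2 - r * distInt y := by rw [hdy, abs_of_nonneg h]
  · have := distInt_le ((r : ℝ) * y) (r * m - k)
    calc distInt ((r : ℝ) * y) ≤ |(r : ℝ) * y - (r * m - k : ℤ)| := this
      _ = |(r : ℝ) * t + r / 2| := by push_cast; rw [hy, hk']; ring_nf
      _ = (r : ℝ) / 2 + r * t := by
          rw [abs_of_nonneg] <;> nlinarith [abs_le.1 habs]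
      _ = (r : ℝ) / 2 - r * distInt y := by
          rw [hdy, abs_of_neg h]; ring

/-- For every even integer `r ≥ 2`, the maximum value of `T_r` on `[0,1]`
is `r² / (2r² − 2)`. -/
theorem takagi_max (r : ℕ) (hr : 2 ≤ r) (hre : Even r) :
    IsGreatest (takagi r '' Set.Icc (0 : ℝ) 1)
      ((r : ℝ) ^ 2 / (2 * (r : ℝ) ^ 2 - 2)) := by
  have hR : (2 : ℝ) ≤ r := by exact_mod_cast hr
  have hR0 : (0 : ℝ) < r := by linarith
  have hR1 : (1 : ℝ) < r := by linarith
  -- summability facts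
  have hsum_aux : ∀ x : ℝ, Summable (fun n : ℕ => distInt ((r : ℝ) ^ n * x) / (r : ℝ) ^ n) := by
    intro x
    have hgeo0 : Summable (fun n : ℕ => 1 / 2 * (1 / (r : ℝ)) ^ n) :=
      (summable_geometric_of_lt_one (by positivity)
        (by rw [div_lt_one hR0]; linarith)).mul_left _
    refine Summable.of_nonneg_of_le
      (fun n => div_nonneg (distInt_nonneg _) (by positivity)) (fun n => ?_) hgeo0
    rw [div_pow, one_pow, mul_one_div]
    gcongr
    exact distInt_le_half _
  constructor
  · -- membership: the maximum is attained at x₀ = r / (2(r+1))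
    set x₀ : ℝ := (r : ℝ) / (2 * (r + 1)) with hx₀
    have hden : (0 : ℝ) < 2 * ((r : ℝ) + 1) := by linarith
    have hx₀0 : 0 ≤ x₀ := by positivity
    have hx₀half : x₀ < 1 / 2 := by
      rw [hx₀, div_lt_div_iff₀ hden (by norm_num)]; linarith
    have hx₀1 : x₀ ≤ 1 := by linarith
    refine ⟨x₀, ⟨hx₀0, hx₀1⟩, ?_⟩
    obtain ⟨k, hk⟩ := hre
    have hk' : (r : ℝ) = 2 * k := by rw [hk]; push_cast; ring
    -- r * x₀ = r/2 - x₀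
    have hrx : (r : ℝ) * x₀ = (k : ℝ) - x₀ := by
      rw [hx₀]; field_simp; nlinarith [hk']
    have horb : ∀ n : ℕ, ∃ m : ℤ,
        (r : ℝ) ^ n * x₀ = m + x₀ ∨ (r : ℝ) ^ n * x₀ = m - x₀ := by
      intro n
      induction n with
      | zero => exact ⟨0, Or.inl (by simp)⟩
      | succ n ih =>
        obtain ⟨m, hm | hm⟩ := ih
        · refine ⟨r * m + k, Or.inr ?_⟩
          rw [pow_succ, mul_comm ((r:ℝ)^n) (r:ℝ), mul_assoc, hm]
          push_cast
          rw [mul_add, hrx]; ring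
        · refine ⟨r * m - k, Or.inl ?_⟩
          rw [pow_succ, mul_comm ((r:ℝ)^n) (r:ℝ), mul_assoc, hm]
          push_cast
          rw [mul_sub, hrx]; ring
    have hdist : ∀ n : ℕ, distInt ((r : ℝ) ^ n * x₀) = x₀ := by
      intro n
      obtain ⟨m, hm | hm⟩ := horb n
      · rw [hm, add_comm, distInt_int_add, distInt_of_small hx₀0 hx₀half]
      · rw [hm, show (m : ℝ) - x₀ = -(x₀ + (-m : ℤ)) by push_cast; ring,
          distInt_neg, distInt_int_add, distInt_of_small hx₀0 hx₀half]
    have : takagi r x₀ = x₀ * (1 - 1 / (r : ℝ))⁻¹ := by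
      rw [takagi]
      have : ∀ n : ℕ, distInt ((r : ℝ) ^ n * x₀) / (r : ℝ) ^ n
          = x₀ * (1 / (r : ℝ)) ^ n := by
        intro n
        rw [hdist n, div_pow, one_pow, mul_one_div]
      rw [tsum_congr this, tsum_mul_left,
        tsum_geometric_of_lt_one (by positivity) (by rw [div_lt_one hR0]; linarith)]
    rw [this, hx₀]
    have hne : (r : ℝ) ≠ 0 := by positivity
    have h2 : (2 : ℝ) * (r : ℝ) ^ 2 - 2 ≠ 0 := by nlinarith
    have hA : (1 : ℝ) - 1 / r = ((r : ℝ) - 1) / r := by field_simp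
    have hden2 : (2 * ((r : ℝ) + 1)) * ((r : ℝ) - 1) ≠ 0 := by nlinarith
    rw [hA, inv_div, div_mul_div_comm, div_eq_div_iff hden2 h2]
    ring
  · -- upper bound
    rintro v ⟨x, _, rfl⟩
    set f : ℕ → ℝ := fun n => distInt ((r : ℝ) ^ n * x) / (r : ℝ) ^ n with hf
    have hsum : Summable f := hsum_aux x
    have hinj2 : Function.Injective (fun k : ℕ => 2 * k) := by
      intro a b h; dsimp only at h; omega
    have hinj2' : Function.Injective (fun k : ℕ => 2 * k + 1) := by
      intro a b h; dsimp only at h; omega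
    have he : Summable (fun k => f (2 * k)) := hsum.comp_injective hinj2
    have ho : Summable (fun k => f (2 * k + 1)) := hsum.comp_injective hinj2'
    have hgeo : Summable (fun k : ℕ => 1 / 2 * (1 / (r : ℝ) ^ 2) ^ k) := by
      apply Summable.mul_left
      apply summable_geometric_of_lt_one (by positivity)
      rw [div_lt_one (by positivity)]; nlinarith
    have hpair : ∀ k : ℕ, f (2 * k) + f (2 * k + 1) ≤ 1 / 2 * (1 / (r : ℝ) ^ 2) ^ k := by
      intro k
      set y := (r : ℝ) ^ (2 * k) * x with hy
      have hP : (0 : ℝ) < (r : ℝ) ^ (2 * k) := by positivity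
      have h1 : f (2 * k) = distInt y / (r : ℝ) ^ (2 * k) := rfl
      have h2 : f (2 * k + 1) = distInt ((r : ℝ) * y) / ((r : ℝ) ^ (2 * k) * r) := by
        rw [hf]
        simp only [pow_succ, hy]
        ring_nf
      have hk1 : distInt y + distInt ((r : ℝ) * y) / r ≤ 1 / 2 := by
        have := key_ineq r hre y
        have h3 : distInt ((r : ℝ) * y) / r ≤ 1 / 2 - distInt y := by
          rw [div_le_iff₀ hR0]
          calc distInt ((r : ℝ) * y) ≤ (r : ℝ) / 2 - r * distInt y := this
            _ = (1 / 2 - distInt y) * r := by ring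
        linarith
      have : f (2 * k) + f (2 * k + 1)
          = (distInt y + distInt ((r : ℝ) * y) / r) / (r : ℝ) ^ (2 * k) := by
        rw [h1, h2]; field_simp
      rw [this]
      calc (distInt y + distInt ((r : ℝ) * y) / r) / (r : ℝ) ^ (2 * k)
          ≤ (1 / 2) / (r : ℝ) ^ (2 * k) := by gcongr
        _ = 1 / 2 * (1 / (r : ℝ) ^ 2) ^ k := by
            rw [div_pow, one_pow, pow_mul, mul_one_div]
    calc takagi r x = (∑' k, f (2 * k)) + ∑' k, f (2 * k + 1) :=
          (tsum_even_add_odd he ho).symm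
      _ = ∑' k, (f (2 * k) + f (2 * k + 1)) := (Summable.tsum_add he ho).symm
      _ ≤ ∑' k, 1 / 2 * (1 / (r : ℝ) ^ 2) ^ k :=
          Summable.tsum_le_tsum hpair (he.add ho) hgeo
      _ = 1 / 2 * (1 - 1 / (r : ℝ) ^ 2)⁻¹ := by
          rw [tsum_mul_left, tsum_geometric_of_lt_one (by positivity)
            (by rw [div_lt_one (by positivity)]; nlinarith)]
      _ = (r : ℝ) ^ 2 / (2 * (r : ℝ) ^ 2 - 2) := by
          have hne : (r : ℝ) ^ 2 ≠ 0 := by positivity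
          have hY : (r : ℝ) ^ 2 - 1 ≠ 0 := by nlinarith
          have h2 : (2 : ℝ) * (r : ℝ) ^ 2 - 2 ≠ 0 := by nlinarith
          have hA : (1 : ℝ) - 1 / (r : ℝ) ^ 2 = ((r : ℝ) ^ 2 - 1) / (r : ℝ) ^ 2 := by
            field_simp
          rw [hA, inv_div, ← mul_div_assoc, div_eq_div_iff hY h2]
          ring
end

section
/- Let r ≥ 2 be even. If x, x' ∈ [0,1) with r-ary expansions x = 0.ε₁ε₂⋯ and x' = 0.η₁η₂⋯ satisfy (i) |D_{r,j}(x)| = |D_{r,j}(x')| for all j ≥ 1, and (ii) for each j, either ε_j = η_j or ε_j + η_j = r − 1, then T_r(x) = T_r(x'). -/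
/-- The `j`-th digit (`j ≥ 1`) in the `r`-ary expansion of `x ∈ [0,1)`,
choosing the expansion ending in `0`'s for `r`-ary rationals. -/
noncomputable def rDigit (r : ℕ) (x : ℝ) (j : ℕ) : ℕ :=
  (⌊(r : ℝ) ^ j * x⌋ % (r : ℤ)).toNat

/-- `D_{r,n}(x) = #{1 ≤ j ≤ n : ε_j < r/2} − #{1 ≤ j ≤ n : ε_j ≥ r/2}`. -/
noncomputable def Drn (r n : ℕ) (x : ℝ) : ℤ :=
  (((Finset.Icc 1 n).filter fun j => 2 * rDigit r x j < r).card : ℤ) -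
    (((Finset.Icc 1 n).filter fun j => r ≤ 2 * rDigit r x j).card : ℤ)

/-! ### Auxiliary development -/

/-- Fractional part of `r^n * x`. -/
noncomputable def yv (r : ℕ) (x : ℝ) (n : ℕ) : ℝ := Int.fract ((r : ℝ) ^ n * x)

lemma yv_nonneg (r : ℕ) (x : ℝ) (n : ℕ) : 0 ≤ yv r x n := Int.fract_nonneg _

lemma yv_lt_one (r : ℕ) (x : ℝ) (n : ℕ) : yv r x n < 1 := Int.fract_lt_one _

lemma yv_zero (r : ℕ) {x : ℝ} (hx : x ∈ Set.Ico (0 : ℝ) 1) : yv r x 0 = x := by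
  simp [yv, Int.fract_eq_self.2 ⟨hx.1, hx.2⟩]

lemma pow_succ_mul_eq (r : ℕ) (x : ℝ) (n : ℕ) :
    (r : ℝ) ^ (n + 1) * x = ((⌊(r : ℝ) ^ n * x⌋ * (r : ℤ) : ℤ) : ℝ) + (r : ℝ) * yv r x n := by
  have : yv r x n = (r : ℝ) ^ n * x - ⌊(r : ℝ) ^ n * x⌋ := rfl
  push_cast
  rw [this]; ring

lemma floor_mul_yv_nonneg (r : ℕ) (x : ℝ) (n : ℕ) : 0 ≤ ⌊(r : ℝ) * yv r x n⌋ :=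
  Int.floor_nonneg.2 (mul_nonneg (by positivity) (yv_nonneg r x n))

lemma floor_mul_yv_lt (r : ℕ) (x : ℝ) (n : ℕ) (hr : 0 < r) : ⌊(r : ℝ) * yv r x n⌋ < r := by
  have hrR : (0 : ℝ) < r := by exact_mod_cast hr
  have : (r : ℝ) * yv r x n < r := by
    nlinarith [yv_lt_one r x n, yv_nonneg r x n]
  exact_mod_cast Int.floor_lt.2 (by exact_mod_cast this)

lemma rDigit_succ_int (r : ℕ) (x : ℝ) (n : ℕ) (hr : 0 < r) :
    (rDigit r x (n + 1) : ℤ) = ⌊(r : ℝ) * yv r x n⌋ := by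
  unfold rDigit
  have h1 : ⌊(r : ℝ) ^ (n + 1) * x⌋ = ⌊(r : ℝ) * yv r x n⌋ + (r : ℤ) * ⌊(r : ℝ) ^ n * x⌋ := by
    rw [pow_succ_mul_eq, Int.floor_intCast_add]
    ring
  have hb0 := floor_mul_yv_nonneg r x n
  have hbr := floor_mul_yv_lt r x n hr
  have h2 : (⌊(r : ℝ) ^ (n + 1) * x⌋ % (r : ℤ)) = ⌊(r : ℝ) * yv r x n⌋ := by
    rw [h1, Int.add_mul_emod_self_left, Int.emod_eq_of_lt hb0 hbr]
  rw [h2, Int.toNat_of_nonneg hb0]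

lemma rDigit_cast_eq (r : ℕ) (x : ℝ) (n : ℕ) (hr : 0 < r) :
    ((rDigit r x (n + 1) : ℕ) : ℝ) = ((⌊(r : ℝ) * yv r x n⌋ : ℤ) : ℝ) := by
  exact_mod_cast rDigit_succ_int r x n hr

lemma rDigit_lt (r : ℕ) (x : ℝ) (n : ℕ) (hr : 0 < r) : rDigit r x (n + 1) < r := by
  have h1 := rDigit_succ_int r x n hr
  have h2 := floor_mul_yv_lt r x n hr
  omega

lemma yv_succ (r : ℕ) (x : ℝ) (n : ℕ) (hr : 0 < r) :
    yv r x (n + 1) = (r : ℝ) * yv r x n - (rDigit r x (n + 1) : ℝ) := by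
  have h1 : yv r x (n + 1) = Int.fract ((r : ℝ) * yv r x n) := by
    unfold yv
    rw [pow_succ_mul_eq, Int.fract_intCast_add]
    rfl
  rw [h1, Int.fract, rDigit_cast_eq r x n hr]

lemma yv_lt_half (r : ℕ) (x : ℝ) (n : ℕ) (hr : 0 < r) (hre : Even r)
    (h : 2 * rDigit r x (n + 1) < r) : yv r x n < 1 / 2 := by
  have hf : (r : ℝ) * yv r x n < (rDigit r x (n + 1) : ℝ) + 1 := by
    have h1 := Int.lt_floor_add_one ((r : ℝ) * yv r x n)
    rw [← rDigit_cast_eq r x n hr] at h1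
    exact h1
  obtain ⟨m, hm⟩ := hre
  have h3 : 2 * (rDigit r x (n + 1) : ℝ) + 2 ≤ (r : ℝ) := by
    exact_mod_cast (by omega : 2 * rDigit r x (n + 1) + 2 ≤ r)
  have hrpos : (0 : ℝ) < r := by exact_mod_cast hr
  nlinarith

lemma half_le_yv (r : ℕ) (x : ℝ) (n : ℕ) (hr : 0 < r)
    (h : r ≤ 2 * rDigit r x (n + 1)) : 1 / 2 ≤ yv r x n := by
  have hf : (rDigit r x (n + 1) : ℝ) ≤ (r : ℝ) * yv r x n := by
    have h1 := Int.floor_le ((r : ℝ) * yv r x n)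
    rw [← rDigit_cast_eq r x n hr] at h1
    exact h1
  have h3 : (r : ℝ) ≤ 2 * (rDigit r x (n + 1) : ℝ) := by exact_mod_cast h
  have hrpos : (0 : ℝ) < r := by exact_mod_cast hr
  nlinarith

lemma distInt_yv (r : ℕ) (x : ℝ) (n : ℕ) (hr : 0 < r) (hre : Even r) :
    distInt ((r : ℝ) ^ n * x) =
      if 2 * rDigit r x (n + 1) < r then yv r x n else 1 - yv r x n := by
  have hsplit : (r : ℝ) ^ n * x = yv r x n + (⌊(r : ℝ) ^ n * x⌋ : ℤ) := by
    unfold yv Int.fract; push_cast; ring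
  have hper : distInt ((r : ℝ) ^ n * x) = distInt (yv r x n) := by
    rw [hsplit]; unfold distInt
    rw [round_add_intCast]
    push_cast
    ring_nf
  rw [hper]
  have h0 := yv_nonneg r x n
  have h1 := yv_lt_one r x n
  by_cases hc : 2 * rDigit r x (n + 1) < r
  · have hy := yv_lt_half r x n hr hre hc
    rw [if_pos hc]
    unfold distInt
    have hrd : round (yv r x n) = 0 := by
      rw [round_eq]
      apply Int.floor_eq_zero_iff.2
      constructor
      · simp; linarith
      · simp; linarith
    rw [hrd]
    push_cast
    rw [sub_zero, abs_of_nonneg h0]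
  · have hy := half_le_yv r x n hr (by omega)
    rw [if_neg hc]
    unfold distInt
    have hrd : round (yv r x n) = 1 := by
      rw [round_eq]
      have : ⌊yv r x n + 1 / 2⌋ = 1 := by
        apply Int.floor_eq_iff.2
        constructor <;> push_cast <;> linarith
      exact this
    rw [hrd]
    push_cast
    rw [abs_of_nonpos (by linarith)]
    ring

lemma Drn_eq_sum (r n : ℕ) (x : ℝ) :
    Drn r n x = ∑ j ∈ Finset.Icc 1 n, (if 2 * rDigit r x j < r then (1 : ℤ) else -1) := by
  unfold Drn
  rw [Finset.sum_ite, Finset.sum_const, Finset.sum_const]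
  have h : (Finset.Icc 1 n).filter (fun j => ¬ 2 * rDigit r x j < r)
      = (Finset.Icc 1 n).filter (fun j => r ≤ 2 * rDigit r x j) := by
    apply Finset.filter_congr
    intro j _
    simp [not_lt]
  rw [h]
  simp [sub_eq_add_neg]

lemma Drn_zero (r : ℕ) (x : ℝ) : Drn r 0 x = 0 := by
  simp [Drn]

lemma Drn_succ (r n : ℕ) (x : ℝ) :
    Drn r (n + 1) x = Drn r n x + (if 2 * rDigit r x (n + 1) < r then (1 : ℤ) else -1) := by
  rw [Drn_eq_sum, Drn_eq_sum, Finset.sum_Icc_succ_top (by omega : 1 ≤ n + 1)]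

lemma abs_Drn_le (r n : ℕ) (x : ℝ) : |Drn r n x| ≤ n := by
  rw [Drn_eq_sum]
  calc |∑ j ∈ Finset.Icc 1 n, (if 2 * rDigit r x j < r then (1 : ℤ) else -1)|
      ≤ ∑ j ∈ Finset.Icc 1 n, |(if 2 * rDigit r x j < r then (1 : ℤ) else -1)| :=
        Finset.abs_sum_le_sum_abs _ _
    _ ≤ ∑ j ∈ Finset.Icc 1 n, 1 := by
        apply Finset.sum_le_sum
        intro j _
        split <;> simp
    _ = n := by simp

/-- The finite partial-sum identity. -/
lemma partial_sum_eq (r : ℕ) (hr : 2 ≤ r) (hre : Even r) {x : ℝ}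
    (hx : x ∈ Set.Ico (0 : ℝ) 1) (N : ℕ) :
    ∑ n ∈ Finset.range N, distInt ((r : ℝ) ^ n * x) / (r : ℝ) ^ n
      = ∑ n ∈ Finset.range N,
          ((if 2 * rDigit r x (n + 1) < r then (0 : ℝ) else 1) / (r : ℝ) ^ n
            + (rDigit r x (n + 1) : ℝ) * (Drn r (n + 1) x : ℝ) / (r : ℝ) ^ (n + 1))
        + (Drn r N x : ℝ) * yv r x N / (r : ℝ) ^ N := by
  have hr0 : 0 < r := by omega
  have hrR : (0 : ℝ) < r := by exact_mod_cast hr0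
  induction N with
  | zero => simp [Drn_zero, yv_zero r hx]
  | succ N ih =>
    rw [Finset.sum_range_succ, Finset.sum_range_succ, ih]
    have hd := distInt_yv r x N hr0 hre
    have hy := yv_succ r x N hr0
    have hDs := Drn_succ r N x
    have hpow : (r : ℝ) ^ N ≠ 0 := by positivity
    have hpow1 : (r : ℝ) ^ (N + 1) = (r : ℝ) ^ N * r := by ring
    by_cases hc : 2 * rDigit r x (N + 1) < r
    · rw [if_pos hc] at hd
      rw [if_pos hc] at hDs
      rw [if_pos hc]
      have hDc : (Drn r (N + 1) x : ℝ) = (Drn r N x : ℝ) + 1 := by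
        rw [hDs]; push_cast; ring
      rw [hd, hy, hDc, hpow1]
      field_simp
      ring
    · rw [if_neg hc] at hd
      rw [if_neg hc] at hDs
      rw [if_neg hc]
      have hDc : (Drn r (N + 1) x : ℝ) = (Drn r N x : ℝ) - 1 := by
        rw [hDs]; push_cast; ring
      rw [hd, hy, hDc, hpow1]
      field_simp
      ring

lemma div_step (A B c u v w : ℝ) (hA : A ≠ 0) (hB : B ≠ 0)
    (h : 2 * B * c + 2 * u = v - B * w) :
    c / A + u / (A * B) = v / (2 * (A * B)) - w / (2 * A) := by
  have e1 : c / A + u / (A * B) = (2 * B * c + 2 * u) / (2 * (A * B)) := by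
    field_simp
  have e2 : v / (2 * (A * B)) - w / (2 * A) = (v - B * w) / (2 * (A * B)) := by
    field_simp
  rw [e1, e2, h]

/-- Per-step integer identity. -/
lemma step_int (r : ℕ) (hr : 2 ≤ r) (hre : Even r) {a a' b b' : ℤ} {e h : ℕ}
    (hb : b = a + (if 2 * e < r then (1 : ℤ) else -1))
    (hb' : b' = a' + (if 2 * h < r then (1 : ℤ) else -1))
    (ha : |a| = |a'|) (habs : |b| = |b'|)
    (hd : e = h ∨ e + h = r - 1) :
    2 * (r : ℤ) * ((if 2 * e < r then (0 : ℤ) else 1) - (if 2 * h < r then (0 : ℤ) else 1))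
      + 2 * ((e : ℤ) * b - (h : ℤ) * b') = (b' - b) - (r : ℤ) * (a' - a) := by
  obtain ⟨m, hm⟩ := hre
  have ha2 : a = a' ∨ a = -a' := abs_eq_abs.mp ha
  have hb2 : b = b' ∨ b = -b' := abs_eq_abs.mp habs
  rcases hd with hd | hd
  · -- equal digits
    subst hd
    have key : a = a' ∧ b = b' := by
      by_cases hc : 2 * e < r
      · rw [if_pos hc] at hb hb'; omega
      · rw [if_neg hc] at hb hb'; omega
    obtain ⟨k1, k2⟩ := key
    subst k1; subst k2
    ring
  · -- reflected digits
    have hne : ¬ (2 * e < r ↔ 2 * h < r) := by omega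
    by_cases hc : 2 * e < r
    · have hc' : ¬ 2 * h < r := by tauto
      rw [if_pos hc] at hb ⊢
      rw [if_neg hc'] at hb' ⊢
      have key : a = -a' ∧ b = -b' := by omega
      obtain ⟨k1, k2⟩ := key
      have hsum : (e : ℤ) + (h : ℤ) = (r : ℤ) - 1 := by omega
      subst k1; subst k2
      linear_combination (-2 * b') * hsum + (2 * (r : ℤ)) * hb
    · have hc' : 2 * h < r := by tauto
      rw [if_neg hc] at hb ⊢
      rw [if_pos hc'] at hb' ⊢
      have key : a = -a' ∧ b = -b' := by omega
      obtain ⟨k1, k2⟩ := key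
      have hsum : (e : ℤ) + (h : ℤ) = (r : ℤ) - 1 := by omega
      subst k1; subst k2
      linear_combination (-2 * b') * hsum + (2 * (r : ℤ)) * hb

/-- Let `r ≥ 2` be even, and let `x, x' ∈ [0,1)` have `r`-ary digits
`ε_j, η_j`. If `|D_{r,j}(x)| = |D_{r,j}(x')|` for all `j ≥ 1`, and for each
`j ≥ 1` either `ε_j = η_j` or `ε_j + η_j = r − 1`, then `T_r(x) = T_r(x')`. -/
theorem takagi_local_level (r : ℕ) (hr : 2 ≤ r) (hre : Even r)
    (x x' : ℝ) (hx : x ∈ Set.Ico (0 : ℝ) 1) (hx' : x' ∈ Set.Ico (0 : ℝ) 1)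
    (hD : ∀ j, 1 ≤ j → |Drn r j x| = |Drn r j x'|)
    (hdig : ∀ j, 1 ≤ j →
      rDigit r x j = rDigit r x' j ∨ rDigit r x j + rDigit r x' j = r - 1) :
    takagi r x = takagi r x' := by
  have hr0 : 0 < r := by omega
  have hrR : (1 : ℝ) < r := by exact_mod_cast hr
  have hrR0 : (0 : ℝ) < r := by linarith
  -- the telescoping function H
  set H : ℕ → ℝ := fun n => ((Drn r n x' : ℝ) - (Drn r n x : ℝ)) / (2 * (r : ℝ) ^ n) with hH
  -- per-index real identity
  have hstep : ∀ n : ℕ,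
      (if 2 * rDigit r x (n + 1) < r then (0 : ℝ) else 1) / (r : ℝ) ^ n
          + (rDigit r x (n + 1) : ℝ) * (Drn r (n + 1) x : ℝ) / (r : ℝ) ^ (n + 1)
        - ((if 2 * rDigit r x' (n + 1) < r then (0 : ℝ) else 1) / (r : ℝ) ^ n
          + (rDigit r x' (n + 1) : ℝ) * (Drn r (n + 1) x' : ℝ) / (r : ℝ) ^ (n + 1))
        = H (n + 1) - H n := by
    intro n
    have hint := step_int r hr hre (a := Drn r n x) (a' := Drn r n x')
      (b := Drn r (n + 1) x) (b' := Drn r (n + 1) x')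
      (e := rDigit r x (n + 1)) (h := rDigit r x' (n + 1))
      (Drn_succ r n x) (Drn_succ r n x')
      (by
        rcases Nat.eq_zero_or_pos n with h0 | h0
        · subst h0; simp [Drn_zero]
        · exact hD n (by omega))
      (hD (n + 1) (by omega))
      (hdig (n + 1) (by omega))
    have hintR : 2 * (r : ℝ) * ((if 2 * rDigit r x (n + 1) < r then (0 : ℝ) else 1)
          - (if 2 * rDigit r x' (n + 1) < r then (0 : ℝ) else 1))
        + 2 * ((rDigit r x (n + 1) : ℝ) * (Drn r (n + 1) x : ℝ)
          - (rDigit r x' (n + 1) : ℝ) * (Drn r (n + 1) x' : ℝ))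
        = ((Drn r (n + 1) x' : ℝ) - (Drn r (n + 1) x : ℝ))
          - (r : ℝ) * ((Drn r n x' : ℝ) - (Drn r n x : ℝ)) := by
      have := congrArg (fun z : ℤ => (z : ℝ)) hint
      push_cast at this
      convert this using 2 <;> split <;> push_cast <;> ring
    have hpow : (r : ℝ) ^ n ≠ 0 := by positivity
    have hgoal := div_step ((r : ℝ) ^ n) (r : ℝ)
      ((if 2 * rDigit r x (n + 1) < r then (0 : ℝ) else 1)
        - (if 2 * rDigit r x' (n + 1) < r then (0 : ℝ) else 1))
      ((rDigit r x (n + 1) : ℝ) * (Drn r (n + 1) x : ℝ)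
        - (rDigit r x' (n + 1) : ℝ) * (Drn r (n + 1) x' : ℝ))
      ((Drn r (n + 1) x' : ℝ) - (Drn r (n + 1) x : ℝ))
      ((Drn r n x' : ℝ) - (Drn r n x : ℝ)) hpow (by positivity) hintR
    rw [hH]
    simp only []
    rw [show (r : ℝ) ^ (n + 1) = (r : ℝ) ^ n * (r : ℝ) from by ring]
    linear_combination hgoal
  -- summability of the two series
  have hfpos : ∀ y : ℝ, ∀ n : ℕ, 0 ≤ distInt ((r : ℝ) ^ n * y) / (r : ℝ) ^ n := by
    intro y n
    apply div_nonneg (abs_nonneg _) (by positivity)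
  have hgeom : Summable (fun n : ℕ => (1 / 2 : ℝ) * (1 / (r : ℝ)) ^ n) := by
    apply Summable.mul_left
    apply summable_geometric_of_lt_one (by positivity)
    rw [div_lt_one hrR0]
    exact hrR
  have hsumm : ∀ y : ℝ, Summable (fun n : ℕ => distInt ((r : ℝ) ^ n * y) / (r : ℝ) ^ n) := by
    intro y
    apply Summable.of_nonneg_of_le (hfpos y) _ hgeom
    intro n
    have h1 : distInt ((r : ℝ) ^ n * y) ≤ 1 / 2 := abs_sub_round _
    have h2 : (0 : ℝ) < (r : ℝ) ^ n := by positivity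
    calc distInt ((r : ℝ) ^ n * y) / (r : ℝ) ^ n ≤ (1 / 2) / (r : ℝ) ^ n := by
          gcongr
      _ = (1 / 2 : ℝ) * (1 / (r : ℝ)) ^ n := by
          rw [div_pow, one_pow]; ring
  -- partial sums difference equals H N plus error terms
  have hdiff : ∀ N : ℕ,
      (∑ n ∈ Finset.range N, distInt ((r : ℝ) ^ n * x) / (r : ℝ) ^ n)
        - (∑ n ∈ Finset.range N, distInt ((r : ℝ) ^ n * x') / (r : ℝ) ^ n)
      = H N + (Drn r N x : ℝ) * yv r x N / (r : ℝ) ^ N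
          - (Drn r N x' : ℝ) * yv r x' N / (r : ℝ) ^ N := by
    intro N
    rw [partial_sum_eq r hr hre hx N, partial_sum_eq r hr hre hx' N]
    have htel : ∑ n ∈ Finset.range N,
        ((if 2 * rDigit r x (n + 1) < r then (0 : ℝ) else 1) / (r : ℝ) ^ n
          + (rDigit r x (n + 1) : ℝ) * (Drn r (n + 1) x : ℝ) / (r : ℝ) ^ (n + 1))
        - ∑ n ∈ Finset.range N,
        ((if 2 * rDigit r x' (n + 1) < r then (0 : ℝ) else 1) / (r : ℝ) ^ n
          + (rDigit r x' (n + 1) : ℝ) * (Drn r (n + 1) x' : ℝ) / (r : ℝ) ^ (n + 1))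
        = H N := by
      rw [← Finset.sum_sub_distrib]
      have : ∀ n ∈ Finset.range N, ((if 2 * rDigit r x (n + 1) < r then (0 : ℝ) else 1) / (r : ℝ) ^ n
          + (rDigit r x (n + 1) : ℝ) * (Drn r (n + 1) x : ℝ) / (r : ℝ) ^ (n + 1))
          - ((if 2 * rDigit r x' (n + 1) < r then (0 : ℝ) else 1) / (r : ℝ) ^ n
          + (rDigit r x' (n + 1) : ℝ) * (Drn r (n + 1) x' : ℝ) / (r : ℝ) ^ (n + 1))
          = H (n + 1) - H n := fun n _ => hstep n
      rw [Finset.sum_congr rfl this, Finset.sum_range_sub]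
      have hH0 : H 0 = 0 := by simp [hH, Drn_zero]
      rw [hH0, sub_zero]
    linarith [htel]
  -- the bound 3N/r^N
  have hbound : ∀ N : ℕ,
      |(∑ n ∈ Finset.range N, distInt ((r : ℝ) ^ n * x) / (r : ℝ) ^ n)
        - (∑ n ∈ Finset.range N, distInt ((r : ℝ) ^ n * x') / (r : ℝ) ^ n)|
      ≤ 3 * N * (1 / (r : ℝ)) ^ N := by
    intro N
    rw [hdiff N]
    have hpN : (0 : ℝ) < (r : ℝ) ^ N := by positivity
    have hDx : |(Drn r N x : ℝ)| ≤ N := by exact_mod_cast abs_Drn_le r N x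
    have hDx' : |(Drn r N x' : ℝ)| ≤ N := by exact_mod_cast abs_Drn_le r N x'
    have hyx := yv_nonneg r x N; have hyx1 := (yv_lt_one r x N).le
    have hyx' := yv_nonneg r x' N; have hyx1' := (yv_lt_one r x' N).le
    have h1 : |H N| ≤ N / (r : ℝ) ^ N := by
      rw [hH]
      rw [abs_div]
      rw [abs_of_pos (by positivity : (0:ℝ) < 2 * (r : ℝ) ^ N)]
      rw [div_le_div_iff₀ (by positivity) hpN]
      have := abs_sub (Drn r N x' : ℝ) (Drn r N x : ℝ)
      nlinarith [abs_sub_abs_le_abs_sub (Drn r N x' : ℝ) (Drn r N x : ℝ),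
        abs_sub (Drn r N x' : ℝ) (Drn r N x : ℝ)]
    have h2 : |(Drn r N x : ℝ) * yv r x N / (r : ℝ) ^ N| ≤ N / (r : ℝ) ^ N := by
      rw [abs_div, abs_of_pos hpN, div_le_div_iff₀ hpN hpN]
      rw [abs_mul, abs_of_nonneg hyx]
      have hm : |(Drn r N x : ℝ)| * yv r x N ≤ (N : ℝ) * 1 :=
        mul_le_mul hDx hyx1 hyx (Nat.cast_nonneg N)
      nlinarith [hm, hpN]
    have h3 : |(Drn r N x' : ℝ) * yv r x' N / (r : ℝ) ^ N| ≤ N / (r : ℝ) ^ N := by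
      rw [abs_div, abs_of_pos hpN, div_le_div_iff₀ hpN hpN]
      rw [abs_mul, abs_of_nonneg hyx']
      have hm : |(Drn r N x' : ℝ)| * yv r x' N ≤ (N : ℝ) * 1 :=
        mul_le_mul hDx' hyx1' hyx' (Nat.cast_nonneg N)
      nlinarith [hm, hpN]
    have hrw : 3 * (N : ℝ) * (1 / (r : ℝ)) ^ N = 3 * (N / (r : ℝ) ^ N) := by
      rw [div_pow, one_pow]; ring
    rw [hrw]
    calc |H N + (Drn r N x : ℝ) * yv r x N / (r : ℝ) ^ N
          - (Drn r N x' : ℝ) * yv r x' N / (r : ℝ) ^ N|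
        ≤ |H N| + |(Drn r N x : ℝ) * yv r x N / (r : ℝ) ^ N|
            + |(Drn r N x' : ℝ) * yv r x' N / (r : ℝ) ^ N| := by
          apply (abs_sub _ _).trans
          gcongr
          exact abs_add_le _ _
      _ ≤ 3 * ((N : ℝ) / (r : ℝ) ^ N) := by linarith
  -- limit of bound is 0
  have hlim0 : Filter.Tendsto (fun N : ℕ => 3 * (N : ℝ) * (1 / (r : ℝ)) ^ N)
      Filter.atTop (nhds 0) := by
    have hnorm : ‖(1 / (r : ℝ))‖ < 1 := by
      rw [Real.norm_eq_abs, abs_of_pos (by positivity)]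
      rw [div_lt_one hrR0]; exact hrR
    have hs := summable_pow_mul_geometric_of_norm_lt_one 1 hnorm (R := ℝ)
    have ht := hs.tendsto_atTop_zero
    have := ht.const_mul (3 : ℝ)
    simp only [mul_zero] at this
    convert this using 2 with N
    simp [pow_one]
    ring
  -- partial sums converge to the tsums
  have htx := (hsumm x).hasSum.tendsto_sum_nat
  have htx' := (hsumm x').hasSum.tendsto_sum_nat
  have hsub := htx.sub htx'
  have hzero : Filter.Tendsto
      (fun N : ℕ => (∑ n ∈ Finset.range N, distInt ((r : ℝ) ^ n * x) / (r : ℝ) ^ n)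
        - (∑ n ∈ Finset.range N, distInt ((r : ℝ) ^ n * x') / (r : ℝ) ^ n))
      Filter.atTop (nhds 0) := by
    apply squeeze_zero_norm _ hlim0
    intro N
    rw [Real.norm_eq_abs]
    exact hbound N
  have := tendsto_nhds_unique hsub hzero
  have heq : takagi r x - takagi r x' = 0 := this
  unfold takagi at heq ⊢
  linarith [heq]
end

section
/- For r = 2 and every integer m ≥ 1, the number of binary strings ε₁⋯ε_{2m} ∈ {0,1}^{2m} such that D_j ≥ 0 for all 1 ≤ j ≤ 2m, D_{2m} = 0, and ε_j = 1 whenever D_j = 0 (j ≤ 2m), equals the Catalan number C_m, where D_j := #{i ≤ j : ε_i = 0} − #{i ≤ j : ε_i = 1}. -/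
open scoped Classical

/-- For a binary string `ε` of length `N`, `D2 ε j` is
`#{i ≤ j : ε_i = 0} − #{i ≤ j : ε_i = 1}` over the first `j` entries. -/
def D2 {N : ℕ} (ε : Fin N → Fin 2) (j : ℕ) : ℤ :=
  ((Finset.univ.filter fun i : Fin N => (i : ℕ) < j ∧ ε i = 0).card : ℤ) -
    ((Finset.univ.filter fun i : Fin N => (i : ℕ) < j ∧ ε i = 1).card : ℤ)

/-- `ε` encodes a leading hump of order `m`: `D_j ≥ 0` for all `j ≤ 2m`,
`D_{2m} = 0`, and `ε_j = 1` whenever `D_j = 0`. -/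
def IsLeadingHump (m : ℕ) (ε : Fin (2 * m) → Fin 2) : Prop :=
  (∀ j, 1 ≤ j → j ≤ 2 * m → 0 ≤ D2 ε j) ∧ D2 ε (2 * m) = 0 ∧
    ∀ j (hj : 1 ≤ j) (hj' : j ≤ 2 * m), D2 ε j = 0 → ε ⟨j - 1, by omega⟩ = 1

/-- `Ĥ²_{m,n}`: the set of binary strings of length `2m` encoding leading
humps of order `m` and generation `n`. -/
noncomputable def H2 (m n : ℕ) : Finset (Fin (2 * m) → Fin 2) :=
  Finset.univ.filter fun ε => IsLeadingHump m ε ∧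
    ((Finset.Icc 1 (2 * m)).filter fun j => D2 ε j = 0).card = n

open DyckStep in
/-- Encode a binary string as a list of Dyck steps (`0 ↦ U`, `1 ↦ D`). -/
def toSteps {N : ℕ} (ε : Fin N → Fin 2) : List DyckStep :=
  List.ofFn fun i => if ε i = 0 then U else D

lemma length_toSteps {N : ℕ} (ε : Fin N → Fin 2) : (toSteps ε).length = N :=
  List.length_ofFn

lemma fin2cases (x : Fin 2) : x = 0 ∨ x = 1 := by revert x; decide

lemma card_step {N : ℕ} (P : Fin N → Prop) [DecidablePred P] (j : ℕ) (hj : j < N) :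
    (Finset.univ.filter fun i : Fin N => (i : ℕ) < j + 1 ∧ P i).card =
      (Finset.univ.filter fun i : Fin N => (i : ℕ) < j ∧ P i).card +
        (if P ⟨j, hj⟩ then 1 else 0) := by
  by_cases hP : P ⟨j, hj⟩
  · rw [if_pos hP]
    have : (Finset.univ.filter fun i : Fin N => (i : ℕ) < j + 1 ∧ P i) =
        insert ⟨j, hj⟩ (Finset.univ.filter fun i : Fin N => (i : ℕ) < j ∧ P i) := by
      ext i
      simp only [Finset.mem_filter, Finset.mem_insert, Finset.mem_univ, true_and]
      constructor
      · rintro ⟨h1, h2⟩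
        rcases Nat.lt_succ_iff_lt_or_eq.mp h1 with h | h
        · exact Or.inr ⟨h, h2⟩
        · exact Or.inl (Fin.ext h)
      · rintro (rfl | ⟨h1, h2⟩)
        · exact ⟨Nat.lt_succ_self _, hP⟩
        · exact ⟨by omega, h2⟩
    rw [this, Finset.card_insert_of_notMem (by simp)]
  · simp only [hP, if_false, add_zero]
    apply congrArg
    ext i
    simp only [Finset.mem_filter, Finset.mem_univ, true_and]
    constructor
    · rintro ⟨h1, h2⟩
      refine ⟨?_, h2⟩
      rcases Nat.lt_succ_iff_lt_or_eq.mp h1 with h | h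
      · exact h
      · exact absurd h2 (by rwa [show i = ⟨j, hj⟩ from Fin.ext h])
    · rintro ⟨h1, h2⟩; exact ⟨by omega, h2⟩

open DyckStep in
lemma counts_take {N : ℕ} (ε : Fin N → Fin 2) :
    ∀ j, j ≤ N →
      ((toSteps ε).take j).count U =
        (Finset.univ.filter fun i : Fin N => (i : ℕ) < j ∧ ε i = 0).card ∧
      ((toSteps ε).take j).count D =
        (Finset.univ.filter fun i : Fin N => (i : ℕ) < j ∧ ε i = 1).card := by
  intro j
  induction j with
  | zero => intro _; simp
  | succ j ih =>
    intro hj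
    have hjN : j < N := hj
    obtain ⟨h1, h2⟩ := ih (by omega)
    have hget : (toSteps ε)[j]? = some (if ε ⟨j, hjN⟩ = 0 then U else D) := by
      rw [List.getElem?_eq_getElem (by rw [length_toSteps]; exact hjN)]
      simp [toSteps]
    rw [List.take_succ, hget, Option.toList_some, List.count_append, List.count_append,
      h1, h2, card_step (fun i => ε i = 0) j hjN, card_step (fun i => ε i = 1) j hjN]
    rcases fin2cases (ε ⟨j, hjN⟩) with h | h <;> simp [h]

lemma D2_eq_counts {N : ℕ} (ε : Fin N → Fin 2) {j : ℕ} (hj : j ≤ N) :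
    D2 ε j = (((toSteps ε).take j).count DyckStep.U : ℤ) -
      (((toSteps ε).take j).count DyckStep.D : ℤ) := by
  rw [D2, (counts_take ε j hj).1, (counts_take ε j hj).2]

lemma D2_zero {N : ℕ} (ε : Fin N → Fin 2) : D2 ε 0 = 0 := by
  simp [D2]

lemma D2_succ {N : ℕ} (ε : Fin N → Fin 2) (j : ℕ) (hj : j < N) :
    D2 ε (j + 1) = D2 ε j + (if ε ⟨j, hj⟩ = 0 then 1 else -1) := by
  rw [D2, D2, card_step (fun i => ε i = 0) j hj, card_step (fun i => ε i = 1) j hj]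
  rcases fin2cases (ε ⟨j, hj⟩) with h | h <;> simp [h] <;> ring

open DyckStep in
lemma count_U_add_count_D (l : List DyckStep) : l.count U + l.count D = l.length := by
  induction l with
  | nil => simp
  | cons a l ih =>
    rcases a.dichotomy with rfl | rfl <;> simp [List.count_cons] <;> omega

open DyckStep in
/-- The Dyck word associated with a leading hump. -/
def toDyck (m : ℕ) (ε : Fin (2 * m) → Fin 2) (hε : IsLeadingHump m ε) : DyckWord := by
  have hNN : (toSteps ε).length = 2 * m := length_toSteps ε
  have htake : (toSteps ε).take (2 * m) = toSteps ε :=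
    List.take_of_length_le (le_of_eq hNN)
  have hUD : (toSteps ε).count U = (toSteps ε).count D := by
    have h := hε.2.1
    rw [D2_eq_counts ε (le_refl (2 * m)), htake] at h
    omega
  exact ⟨toSteps ε, hUD, fun i => by
    by_cases hi : i ≤ 2 * m
    · rcases Nat.eq_zero_or_pos i with rfl | hpos
      · simp
      · have h := hε.1 i hpos hi
        rw [D2_eq_counts ε hi] at h
        omega
    · rw [List.take_of_length_le (by omega)]
      exact hUD.ge⟩

lemma toList_toDyck (m : ℕ) (ε : Fin (2 * m) → Fin 2) (hε : IsLeadingHump m ε) :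
    (toDyck m ε hε).toList = toSteps ε := rfl

lemma semilength_toDyck (m : ℕ) (ε : Fin (2 * m) → Fin 2) (hε : IsLeadingHump m ε) :
    (toDyck m ε hε).semilength = m := by
  have h := (toDyck m ε hε).count_U_eq_count_D
  have hsum := count_U_add_count_D (toDyck m ε hε).toList
  have hlen : (toDyck m ε hε).toList.length = 2 * m := length_toSteps ε
  show (toDyck m ε hε).toList.count DyckStep.U = m
  omega

open DyckStep in
/-- Decode a Dyck word of length `2m` into a binary string. -/
def fromWord (m : ℕ) (p : DyckWord) (hlen : p.toList.length = 2 * m) :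
    Fin (2 * m) → Fin 2 :=
  fun i => if p.toList[(i : ℕ)]'(by rw [hlen]; exact i.2) = U then 0 else 1

lemma toSteps_fromWord (m : ℕ) (p : DyckWord) (hlen : p.toList.length = 2 * m) :
    toSteps (fromWord m p hlen) = p.toList := by
  apply List.ext_getElem (by rw [length_toSteps, hlen])
  intro i h1 h2
  simp only [toSteps, fromWord, List.getElem_ofFn]
  rcases (p.toList[i]'h2).dichotomy with h | h <;> simp [h]

lemma isLeadingHump_fromWord (m : ℕ) (p : DyckWord) (hlen : p.toList.length = 2 * m) :
    IsLeadingHump m (fromWord m p hlen) := by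
  set ε := fromWord m p hlen with hεdef
  have htl : toSteps ε = p.toList := toSteps_fromWord m p hlen
  have h1 : ∀ j, 1 ≤ j → j ≤ 2 * m → 0 ≤ D2 ε j := by
    intro j _ hj
    rw [D2_eq_counts ε hj, htl]
    have := p.count_D_le_count_U j
    omega
  refine ⟨h1, ?_, ?_⟩
  · rw [D2_eq_counts ε (le_refl (2 * m)), htl, List.take_of_length_le (by omega),
      p.count_U_eq_count_D, sub_self]
  · intro j hj hj' h0
    obtain ⟨j', rfl⟩ : ∃ j', j = j' + 1 := ⟨j - 1, by omega⟩
    have hjN : j' < 2 * m := by omega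
    have hstep := D2_succ ε j' hjN
    rcases fin2cases (ε ⟨j' + 1 - 1, by omega⟩) with h | h
    · exfalso
      have h' : ε ⟨j', hjN⟩ = 0 := h
      rw [if_pos h'] at hstep
      have hprev : 0 ≤ D2 ε j' := by
        rcases Nat.eq_zero_or_pos j' with rfl | hpos
        · rw [D2_zero]
        · exact h1 j' hpos (by omega)
      omega
    · exact h

/-- Leading humps of order `m` are in bijection with Dyck words of semilength `m`. -/
noncomputable def humpEquiv (m : ℕ) :
    {ε : Fin (2 * m) → Fin 2 // IsLeadingHump m ε} ≃ {p : DyckWord // p.semilength = m} where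
  toFun := fun εh => ⟨toDyck m εh.1 εh.2, semilength_toDyck m εh.1 εh.2⟩
  invFun := fun ph =>
    ⟨fromWord m ph.1 (by rw [← ph.1.two_mul_semilength_eq_length, ph.2]),
      isLeadingHump_fromWord m ph.1 _⟩
  left_inv := by
    rintro ⟨ε, hε⟩
    apply Subtype.ext
    funext i
    show (if (toSteps ε)[(i : ℕ)]'_ = DyckStep.U then (0 : Fin 2) else 1) = ε i
    simp only [toSteps, List.getElem_ofFn, Fin.eta]
    rcases fin2cases (ε i) with h | h <;> simp [h]
  right_inv := by
    rintro ⟨p, hp⟩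
    apply Subtype.ext
    apply DyckWord.ext
    exact toSteps_fromWord m p (by rw [← p.two_mul_semilength_eq_length, hp])

/-- For every `m ≥ 1`, the number of binary strings of length `2m` with
`D_j ≥ 0` for all `j ≤ 2m`, `D_{2m} = 0`, and `ε_j = 1` whenever `D_j = 0`
(i.e. leading humps of order `m`), equals the Catalan number `C_m`. -/
theorem card_leading_humps_eq_catalan (m : ℕ) (hm : 1 ≤ m) :
    (Finset.univ.filter fun ε : Fin (2 * m) → Fin 2 =>
        IsLeadingHump m ε).card = catalan m := by
  rw [← Fintype.card_subtype, Fintype.card_congr (humpEquiv m),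
    DyckWord.card_dyckWord_semilength_eq_catalan]
end

section
/- For r = 2 and every m ≥ 2, the number of binary strings of length 2m encoding leading humps of order m and generation 2 equals the number of those of order m and generation 1; i.e., card(Ĥ²_{m,2}) = card(Ĥ²_{m,1}). -/
open scoped Classical

namespace HumpAux

lemma fin2 (x : Fin 2) : x = 0 ∨ x = 1 := by fin_cases x <;> simp

lemma D2_zero {N : ℕ} (ε : Fin N → Fin 2) : D2 ε 0 = 0 := by
  simp [D2]

lemma filter_succ {N : ℕ} (ε : Fin N → Fin 2) {j : ℕ} (h : j < N) (c : Fin 2) :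
    (Finset.univ.filter fun i : Fin N => (i : ℕ) < j + 1 ∧ ε i = c).card
      = (Finset.univ.filter fun i : Fin N => (i : ℕ) < j ∧ ε i = c).card
        + (if ε ⟨j, h⟩ = c then 1 else 0) := by
  by_cases hc : ε ⟨j, h⟩ = c
  · rw [if_pos hc]
    have hset : (Finset.univ.filter fun i : Fin N => (i : ℕ) < j + 1 ∧ ε i = c)
        = insert ⟨j, h⟩ (Finset.univ.filter fun i : Fin N => (i : ℕ) < j ∧ ε i = c) := by
      ext i
      simp only [Finset.mem_insert, Finset.mem_filter, Finset.mem_univ, true_and]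
      constructor
      · rintro ⟨h1, h2⟩
        rcases Nat.lt_succ_iff_lt_or_eq.mp h1 with h1 | h1
        · exact Or.inr ⟨h1, h2⟩
        · exact Or.inl (Fin.ext h1)
      · rintro (rfl | ⟨h1, h2⟩)
        · exact ⟨Nat.lt_succ_self j, hc⟩
        · exact ⟨Nat.lt_succ_of_lt h1, h2⟩
    rw [hset, Finset.card_insert_of_notMem (by simp)]
  · rw [if_neg hc, Nat.add_zero]
    have hset : (Finset.univ.filter fun i : Fin N => (i : ℕ) < j + 1 ∧ ε i = c)
        = (Finset.univ.filter fun i : Fin N => (i : ℕ) < j ∧ ε i = c) := by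
      ext i
      simp only [Finset.mem_filter, Finset.mem_univ, true_and]
      constructor
      · rintro ⟨h1, h2⟩
        rcases Nat.lt_succ_iff_lt_or_eq.mp h1 with h1 | h1
        · exact ⟨h1, h2⟩
        · exact absurd h2 (by rw [show i = ⟨j, h⟩ from Fin.ext h1]; exact hc)
      · rintro ⟨h1, h2⟩
        exact ⟨Nat.lt_succ_of_lt h1, h2⟩
    rw [hset]; omega

lemma D2_succ {N : ℕ} (ε : Fin N → Fin 2) {j : ℕ} (h : j < N) :
    D2 ε (j + 1) = D2 ε j + (if ε ⟨j, h⟩ = 0 then 1 else -1) := by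
  unfold D2
  rw [filter_succ ε h 0, filter_succ ε h 1]
  rcases fin2 (ε ⟨j, h⟩) with hv | hv
  · rw [if_pos hv, if_pos hv, if_neg (by rw [hv]; decide)]
    push_cast; ring
  · rw [if_neg (by rw [hv]; decide), if_pos hv, if_neg (by rw [hv]; decide)]
    push_cast; ring

lemma D2_succ0 {N : ℕ} (ε : Fin N → Fin 2) {j : ℕ} (h : j < N) (hv : ε ⟨j, h⟩ = 0) :
    D2 ε (j + 1) = D2 ε j + 1 := by rw [D2_succ ε h, if_pos hv]

lemma D2_succ1 {N : ℕ} (ε : Fin N → Fin 2) {j : ℕ} (h : j < N) (hv : ε ⟨j, h⟩ = 1) :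
    D2 ε (j + 1) = D2 ε j - 1 := by
  rw [D2_succ ε h, if_neg (by rw [hv]; decide)]; ring

lemma D2_step {N : ℕ} (ε : Fin N → Fin 2) {j : ℕ} (h : j < N) :
    D2 ε (j + 1) = D2 ε j + 1 ∨ D2 ε (j + 1) = D2 ε j - 1 := by
  rcases fin2 (ε ⟨j, h⟩) with hv | hv
  · exact Or.inl (D2_succ0 ε h hv)
  · exact Or.inr (D2_succ1 ε h hv)

lemma D2_agree {N : ℕ} {ε ε' : Fin N → Fin 2} {j : ℕ}
    (h : ∀ i : Fin N, (i : ℕ) < j → ε i = ε' i) : D2 ε j = D2 ε' j := by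
  unfold D2
  have key : ∀ c : Fin 2, (Finset.univ.filter fun i : Fin N => (i : ℕ) < j ∧ ε i = c)
      = (Finset.univ.filter fun i : Fin N => (i : ℕ) < j ∧ ε' i = c) := by
    intro c
    ext i
    simp only [Finset.mem_filter, Finset.mem_univ, true_and]
    constructor
    · rintro ⟨h1, h2⟩; exact ⟨h1, by rw [← h i h1]; exact h2⟩
    · rintro ⟨h1, h2⟩; exact ⟨h1, by rw [h i h1]; exact h2⟩
  rw [key 0, key 1]

lemma eps_eq_one_of_zero {N : ℕ} (ε : Fin N → Fin 2)
    (hnn : ∀ j, 1 ≤ j → j ≤ N → 0 ≤ D2 ε j)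
    {j : ℕ} (hj : 1 ≤ j) (hj' : j ≤ N) (h0 : D2 ε j = 0) :
    ε ⟨j - 1, by omega⟩ = 1 := by
  obtain ⟨j', rfl⟩ : ∃ j'', j = j'' + 1 := ⟨j - 1, by omega⟩
  have hlt : j' < N := by omega
  rcases fin2 (ε ⟨j', hlt⟩) with hv | hv
  · exfalso
    have hs := D2_succ0 ε hlt hv
    rcases Nat.eq_zero_or_pos j' with h0' | h0'
    · subst h0'; rw [D2_zero] at hs; omega
    · have := hnn j' (by omega) (by omega); omega
  · exact hv
noncomputable def kOf (m : ℕ) (ε : Fin (2 * m) → Fin 2) : ℕ :=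
  sInf {j | 1 ≤ j ∧ D2 ε j = 0}

noncomputable def tOf (m : ℕ) (ε : Fin (2 * m) → Fin 2) : ℕ :=
  Nat.findGreatest (fun j => D2 ε j = 1) (2 * m - 2)

noncomputable def fmap (m : ℕ) (ε : Fin (2 * m) → Fin 2) : Fin (2 * m) → Fin 2 :=
  fun i =>
    if (i : ℕ) < kOf m ε - 1 then ε i
    else if h2 : (i : ℕ) = 2 * m - 1 then 1
    else ε ⟨(i : ℕ) + 1, by have := i.isLt; omega⟩

noncomputable def gmap (m : ℕ) (ε : Fin (2 * m) → Fin 2) : Fin (2 * m) → Fin 2 :=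
  fun i =>
    if (i : ℕ) < tOf m ε then ε i
    else if (i : ℕ) = tOf m ε then 1
    else ε ⟨(i : ℕ) - 1, by have := i.isLt; omega⟩

lemma mem_H2 {m n : ℕ} {ε : Fin (2 * m) → Fin 2} :
    ε ∈ H2 m n ↔ ((∀ j, 1 ≤ j → j ≤ 2 * m → 0 ≤ D2 ε j) ∧ D2 ε (2 * m) = 0 ∧
      ((Finset.Icc 1 (2 * m)).filter fun j => D2 ε j = 0).card = n) := by
  rw [H2, Finset.mem_filter]
  simp only [Finset.mem_univ, true_and, IsLeadingHump]
  constructor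
  · rintro ⟨⟨h1, h2, _⟩, h3⟩; exact ⟨h1, h2, h3⟩
  · rintro ⟨h1, h2, h3⟩
    exact ⟨⟨h1, h2, fun j hj hj' h0 => eps_eq_one_of_zero ε h1 hj hj' h0⟩, h3⟩

/-- data for a generation-2 hump -/
lemma two_data {m : ℕ} (hm : 2 ≤ m) {ε : Fin (2 * m) → Fin 2}
    (hnn : ∀ j, 1 ≤ j → j ≤ 2 * m → 0 ≤ D2 ε j) (hend : D2 ε (2 * m) = 0)
    (hcard : ((Finset.Icc 1 (2 * m)).filter fun j => D2 ε j = 0).card = 2) :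
    2 ≤ kOf m ε ∧ kOf m ε ≤ 2 * m - 2 ∧ D2 ε (kOf m ε) = 0 ∧
      (∀ j, 1 ≤ j → j ≤ 2 * m → D2 ε j = 0 → j = kOf m ε ∨ j = 2 * m) := by
  set k := kOf m ε with hkdef
  have hmem2m : (2 * m) ∈ {j | 1 ≤ j ∧ D2 ε j = 0} := ⟨by omega, hend⟩
  have hkmem : k ∈ {j | 1 ≤ j ∧ D2 ε j = 0} := Nat.sInf_mem ⟨_, hmem2m⟩
  have hk1 : 1 ≤ k := hkmem.1
  have hk0 : D2 ε k = 0 := hkmem.2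
  have hkle : k ≤ 2 * m := Nat.sInf_le hmem2m
  have hmin : ∀ j, 1 ≤ j → j < k → D2 ε j ≠ 0 := by
    intro j hj hjk h0
    exact Nat.notMem_of_lt_sInf hjk ⟨hj, h0⟩
  -- k ≠ 2m
  have hkne : k ≠ 2 * m := by
    intro hk
    have hset : ((Finset.Icc 1 (2 * m)).filter fun j => D2 ε j = 0) = {2 * m} := by
      ext j
      simp only [Finset.mem_filter, Finset.mem_Icc, Finset.mem_singleton]
      constructor
      · rintro ⟨⟨hj1, hj2⟩, hj0⟩
        by_contra hne
        exact hmin j hj1 (by omega) hj0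
      · rintro rfl
        exact ⟨⟨by omega, le_refl _⟩, hend⟩
    rw [hset] at hcard
    simp at hcard
  have hklt : k < 2 * m := lt_of_le_of_ne hkle hkne
  -- uniqueness
  have hsub : ({k, 2 * m} : Finset ℕ) ⊆ (Finset.Icc 1 (2 * m)).filter fun j => D2 ε j = 0 := by
    intro j hj
    simp only [Finset.mem_insert, Finset.mem_singleton] at hj
    simp only [Finset.mem_filter, Finset.mem_Icc]
    rcases hj with rfl | rfl
    · exact ⟨⟨hk1, hkle⟩, hk0⟩
    · exact ⟨⟨by omega, le_refl _⟩, hend⟩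
  have hcard2 : ({k, 2 * m} : Finset ℕ).card = 2 := by
    rw [Finset.card_insert_of_notMem (by simp [hkne]), Finset.card_singleton]
  have hseteq : ((Finset.Icc 1 (2 * m)).filter fun j => D2 ε j = 0) = {k, 2 * m} :=
    (Finset.eq_of_subset_of_card_le hsub (by omega)).symm
  have huniq : ∀ j, 1 ≤ j → j ≤ 2 * m → D2 ε j = 0 → j = k ∨ j = 2 * m := by
    intro j hj1 hj2 hj0
    have : j ∈ ((Finset.Icc 1 (2 * m)).filter fun j => D2 ε j = 0) := by
      simp only [Finset.mem_filter, Finset.mem_Icc]; exact ⟨⟨hj1, hj2⟩, hj0⟩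
    rw [hseteq] at this
    simpa using this
  -- 2 ≤ k
  have hk2 : 2 ≤ k := by
    rcases Nat.lt_or_ge k 2 with h | h
    · exfalso
      have : k = 1 := by omega
      rw [this] at hk0
      rcases D2_step ε (show 0 < 2 * m by omega) with hs | hs <;>
        rw [D2_zero] at hs <;> norm_num at hs <;> omega
    · exact h
  -- k ≤ 2m - 2
  have hkub : k ≤ 2 * m - 2 := by
    rcases Nat.lt_or_ge k (2 * m - 1) with h | h
    · omega
    · exfalso
      have hkeq : k = 2 * m - 1 := by omega
      have hstep := D2_step ε (show 2 * m - 1 < 2 * m by omega)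
      rw [show 2 * m - 1 + 1 = 2 * m by omega] at hstep
      rw [hkeq] at hk0
      omega
  exact ⟨hk2, hkub, hk0, huniq⟩

/-- data for a generation-1 hump -/
lemma one_data {m : ℕ} (hm : 2 ≤ m) {ε : Fin (2 * m) → Fin 2}
    (hnn : ∀ j, 1 ≤ j → j ≤ 2 * m → 0 ≤ D2 ε j) (hend : D2 ε (2 * m) = 0)
    (hcard : ((Finset.Icc 1 (2 * m)).filter fun j => D2 ε j = 0).card = 1) :
    ∀ j, 1 ≤ j → j ≤ 2 * m - 1 → 1 ≤ D2 ε j := by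
  have hsub : ({2 * m} : Finset ℕ) ⊆ (Finset.Icc 1 (2 * m)).filter fun j => D2 ε j = 0 := by
    intro j hj
    simp only [Finset.mem_singleton] at hj
    subst hj
    simp only [Finset.mem_filter, Finset.mem_Icc]
    exact ⟨⟨by omega, le_refl _⟩, hend⟩
  have hseteq : ((Finset.Icc 1 (2 * m)).filter fun j => D2 ε j = 0) = {2 * m} :=
    (Finset.eq_of_subset_of_card_le hsub (by simp [hcard])).symm
  intro j hj1 hj2
  have hne : D2 ε j ≠ 0 := by
    intro h0
    have : j ∈ ((Finset.Icc 1 (2 * m)).filter fun j => D2 ε j = 0) := by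
      simp only [Finset.mem_filter, Finset.mem_Icc]; exact ⟨⟨hj1, by omega⟩, h0⟩
    rw [hseteq] at this
    simp at this
    omega
  have := hnn j hj1 (by omega)
  omega
lemma fmap_good {m : ℕ} (hm : 2 ≤ m) {ε : Fin (2 * m) → Fin 2} (hε : ε ∈ H2 m 2) :
    fmap m ε ∈ H2 m 1 ∧ gmap m (fmap m ε) = ε := by
  obtain ⟨hnn, hend, hcard⟩ := mem_H2.mp hε
  obtain ⟨hk2, hkub, hk0, huniq⟩ := two_data hm hnn hend hcard
  set k := kOf m ε with hkdef
  set ε' := fmap m ε with hedef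
  -- values of ε'
  have heps_lo : ∀ i : Fin (2 * m), (i : ℕ) < k - 1 → ε' i = ε i := by
    intro i hi
    rw [hedef]
    simp only [fmap]
    rw [← hkdef, if_pos hi]
  have heps_mid : ∀ (n : ℕ) (h1 : n < 2 * m) (h2 : n + 1 < 2 * m),
      ¬ n < k - 1 → ε' ⟨n, h1⟩ = ε ⟨n + 1, h2⟩ := by
    intro n h1 h2 hn
    rw [hedef]
    simp only [fmap, Fin.val_mk]
    rw [← hkdef, if_neg hn, dif_neg (by omega)]
  have heps_last : ε' ⟨2 * m - 1, by omega⟩ = 1 := by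
    rw [hedef]
    simp only [fmap, Fin.val_mk]
    rw [← hkdef, if_neg (by omega)]
    simp
  -- A: D2 agrees up to k-1
  have hA : ∀ j, j ≤ k - 1 → D2 ε' j = D2 ε j := by
    intro j hj
    exact (D2_agree (fun i hi => (heps_lo i (by omega)).symm)).symm
  have hDk1 : D2 ε (k - 1) = 1 := by
    have hs := D2_step ε (show k - 1 < 2 * m by omega)
    rw [show k - 1 + 1 = k by omega] at hs
    have := hnn (k - 1) (by omega) (by omega)
    omega
  -- B: shifted values
  have hB : ∀ j, k - 1 ≤ j → j ≤ 2 * m - 1 → D2 ε' j = D2 ε (j + 1) + 1 := by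
    intro j hj
    refine Nat.le_induction ?_ ?_ j hj
    · intro _
      rw [hA (k - 1) le_rfl, show k - 1 + 1 = k by omega, hk0, hDk1]
      ring
    · intro n hn ih hub
      have h1 : n < 2 * m := by omega
      have h2 : n + 1 < 2 * m := by omega
      have heps := heps_mid n h1 h2 (by omega)
      have ihv := ih (by omega)
      rcases fin2 (ε ⟨n + 1, h2⟩) with hv | hv
      · have e1 := D2_succ0 ε' h1 (by rw [heps]; exact hv)
        have e2 := D2_succ0 ε h2 hv
        omega
      · have e1 := D2_succ1 ε' h1 (by rw [heps]; exact hv)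
        have e2 := D2_succ1 ε h2 hv
        omega
  -- C: end value
  have hC : D2 ε' (2 * m) = 0 := by
    have e1 := D2_succ1 ε' (show 2 * m - 1 < 2 * m by omega) heps_last
    rw [show 2 * m - 1 + 1 = 2 * m by omega] at e1
    have e2 := hB (2 * m - 1) (by omega) le_rfl
    rw [show 2 * m - 1 + 1 = 2 * m by omega] at e2
    omega
  -- nonnegativity
  have hnn' : ∀ j, 1 ≤ j → j ≤ 2 * m → 0 ≤ D2 ε' j := by
    intro j h1 h2
    by_cases hc : j ≤ k - 1
    · rw [hA j hc]; exact hnn j h1 (by omega)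
    · by_cases hc2 : j ≤ 2 * m - 1
      · rw [hB j (by omega) hc2]
        have := hnn (j + 1) (by omega) (by omega)
        omega
      · rw [show j = 2 * m by omega, hC]
  -- zero set
  have hset : ((Finset.Icc 1 (2 * m)).filter fun j => D2 ε' j = 0) = {2 * m} := by
    ext j
    simp only [Finset.mem_filter, Finset.mem_Icc, Finset.mem_singleton]
    constructor
    · rintro ⟨⟨h1, h2⟩, h0⟩
      by_contra hne
      by_cases hc : j ≤ k - 1
      · rw [hA j hc] at h0
        rcases huniq j h1 h2 h0 with rfl | rfl
        · omega
        · omega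
      · rw [hB j (by omega) (by omega)] at h0
        have := hnn (j + 1) (by omega) (by omega)
        omega
    · rintro rfl
      exact ⟨⟨by omega, le_rfl⟩, hC⟩
  have hmem : ε' ∈ H2 m 1 := mem_H2.mpr ⟨hnn', hC, by rw [hset]; simp⟩
  -- tOf of ε'
  have hPk1 : D2 ε' (k - 1) = 1 := by rw [hA (k - 1) le_rfl]; exact hDk1
  have htOf : tOf m ε' = k - 1 := by
    have hle1 : k - 1 ≤ tOf m ε' := Nat.le_findGreatest (by omega) hPk1
    have hle2 : tOf m ε' ≤ k - 1 := by
      by_contra hlt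
      push_neg at hlt
      have hub : tOf m ε' ≤ 2 * m - 2 := Nat.findGreatest_le _
      have hPt : D2 ε' (tOf m ε') = 1 := Nat.findGreatest_spec (P := fun j => D2 ε' j = 1) (by omega) hPk1
      rw [hB (tOf m ε') (by omega) (by omega)] at hPt
      have h0 : D2 ε (tOf m ε' + 1) = 0 := by omega
      rcases huniq (tOf m ε' + 1) (by omega) (by omega) h0 with h | h <;> omega
    omega
  refine ⟨hmem, ?_⟩
  -- left inverse
  funext i
  have hi := i.isLt
  simp only [gmap]
  rw [htOf]
  by_cases h1 : (i : ℕ) < k - 1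
  · rw [if_pos h1]
    exact heps_lo i h1
  · rw [if_neg h1]
    by_cases h2 : (i : ℕ) = k - 1
    · rw [if_pos h2]
      have hval := eps_eq_one_of_zero ε hnn (show 1 ≤ k by omega) (show k ≤ 2 * m by omega) hk0
      have hieq : i = ⟨k - 1, by omega⟩ := Fin.ext (by simpa using h2)
      rw [hieq, hval]
    · rw [if_neg h2]
      have hv1 : (i : ℕ) - 1 < 2 * m := by omega
      have hv2 : (i : ℕ) - 1 + 1 < 2 * m := by omega
      have := heps_mid ((i : ℕ) - 1) hv1 hv2 (by omega)
      rw [this]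
      congr 1
      exact Fin.ext (by simp; omega)
lemma gmap_good {m : ℕ} (hm : 2 ≤ m) {ε' : Fin (2 * m) → Fin 2} (hε' : ε' ∈ H2 m 1) :
    gmap m ε' ∈ H2 m 2 ∧ fmap m (gmap m ε') = ε' := by
  obtain ⟨hnn, hend, hcard⟩ := mem_H2.mp hε'
  have hpos := one_data hm hnn hend hcard
  set t := tOf m ε' with htdef
  -- basic facts about t
  have hD1 : D2 ε' 1 = 1 := by
    have hs := D2_step ε' (show 0 < 2 * m by omega)
    rw [D2_zero] at hs
    norm_num at hs
    have := hpos 1 le_rfl (by omega)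
    omega
  have ht1 : 1 ≤ t := Nat.le_findGreatest (by omega) hD1
  have htub : t ≤ 2 * m - 2 := Nat.findGreatest_le _
  have hPt : D2 ε' t = 1 :=
    Nat.findGreatest_spec (P := fun j => D2 ε' j = 1) (by omega) hD1
  have hgt : ∀ j, t < j → j ≤ 2 * m - 2 → 2 ≤ D2 ε' j := by
    intro j hj1 hj2
    have hne := Nat.findGreatest_is_greatest (P := fun j => D2 ε' j = 1) hj1 hj2
    have := hpos j (by omega) (by omega)
    omega
  have hlast : D2 ε' (2 * m - 1) = 1 := by
    have hs := D2_step ε' (show 2 * m - 1 < 2 * m by omega)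
    rw [show 2 * m - 1 + 1 = 2 * m by omega] at hs
    have := hpos (2 * m - 1) (by omega) le_rfl
    omega
  set ε := gmap m ε' with hedef
  -- values of ε
  have hg_lo : ∀ i : Fin (2 * m), (i : ℕ) < t → ε i = ε' i := by
    intro i hi
    rw [hedef]
    simp only [gmap]
    rw [← htdef, if_pos hi]
  have hg_t : ∀ h1 : t < 2 * m, ε ⟨t, h1⟩ = 1 := by
    intro h1
    rw [hedef]
    simp only [gmap, Fin.val_mk]
    rw [← htdef, if_neg (lt_irrefl t)]
    simp
  have hg_hi : ∀ (n : ℕ) (h1 : n < 2 * m) (h2 : n - 1 < 2 * m),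
      t < n → ε ⟨n, h1⟩ = ε' ⟨n - 1, h2⟩ := by
    intro n h1 h2 hn
    rw [hedef]
    simp only [gmap, Fin.val_mk]
    rw [← htdef, if_neg (by omega), if_neg (by omega)]
  -- A
  have hA : ∀ j, j ≤ t → D2 ε j = D2 ε' j := by
    intro j hj
    exact D2_agree (fun i hi => hg_lo i (by omega))
  -- B
  have hB : ∀ j, t + 1 ≤ j → j ≤ 2 * m → D2 ε j = D2 ε' (j - 1) - 1 := by
    intro j hj
    refine Nat.le_induction ?_ ?_ j hj
    · intro _
      have e1 := D2_succ1 ε (show t < 2 * m by omega) (hg_t _)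
      rw [show t + 1 - 1 = t by omega, hA t le_rfl] at *
      exact e1
    · intro n hn ih hub
      have h1 : n < 2 * m := by omega
      have h2 : n - 1 < 2 * m := by omega
      have heps := hg_hi n h1 h2 (by omega)
      have ihv := ih (by omega)
      rw [show n + 1 - 1 = n by omega]
      rcases fin2 (ε' ⟨n - 1, h2⟩) with hv | hv
      · have e1 := D2_succ0 ε h1 (by rw [heps]; exact hv)
        have e2 := D2_succ0 ε' h2 hv
        rw [show n - 1 + 1 = n by omega] at e2
        omega
      · have e1 := D2_succ1 ε h1 (by rw [heps]; exact hv)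
        have e2 := D2_succ1 ε' h2 hv
        rw [show n - 1 + 1 = n by omega] at e2
        omega
  have hend2 : D2 ε (2 * m) = 0 := by
    rw [hB (2 * m) (by omega) le_rfl, hlast]
    ring
  have hzt : D2 ε (t + 1) = 0 := by
    rw [hB (t + 1) le_rfl (by omega), show t + 1 - 1 = t by omega, hPt]
    ring
  -- nonnegativity
  have hnn2 : ∀ j, 1 ≤ j → j ≤ 2 * m → 0 ≤ D2 ε j := by
    intro j h1 h2
    by_cases hc : j ≤ t
    · rw [hA j hc]
      have := hpos j h1 (by omega)
      omega
    · rw [hB j (by omega) h2]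
      have := hpos (j - 1) (by omega) (by omega)
      omega
  -- zero set
  have hset : ((Finset.Icc 1 (2 * m)).filter fun j => D2 ε j = 0) = {t + 1, 2 * m} := by
    ext j
    simp only [Finset.mem_filter, Finset.mem_Icc, Finset.mem_insert, Finset.mem_singleton]
    constructor
    · rintro ⟨⟨h1, h2⟩, h0⟩
      by_cases hc : j ≤ t
      · exfalso
        rw [hA j hc] at h0
        have := hpos j h1 (by omega)
        omega
      · rw [hB j (by omega) h2] at h0
        by_contra hne
        push_neg at hne
        have := hgt (j - 1) (by omega) (by omega)
        omega
    · rintro (rfl | rfl)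
      · exact ⟨⟨by omega, by omega⟩, hzt⟩
      · exact ⟨⟨by omega, le_rfl⟩, hend2⟩
  have hcard2 : ((Finset.Icc 1 (2 * m)).filter fun j => D2 ε j = 0).card = 2 := by
    rw [hset, Finset.card_insert_of_notMem (by simp; omega), Finset.card_singleton]
  have hmem : ε ∈ H2 m 2 := mem_H2.mpr ⟨hnn2, hend2, hcard2⟩
  -- kOf of ε
  have hkOf : kOf m ε = t + 1 := by
    have hm1 : (t + 1) ∈ {j | 1 ≤ j ∧ D2 ε j = 0} := ⟨by omega, hzt⟩
    have hle1 : kOf m ε ≤ t + 1 := Nat.sInf_le hm1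
    have hkmem : kOf m ε ∈ {j | 1 ≤ j ∧ D2 ε j = 0} := Nat.sInf_mem ⟨_, hm1⟩
    have hle2 : t + 1 ≤ kOf m ε := by
      by_contra hlt
      push_neg at hlt
      have hle : kOf m ε ≤ t := by omega
      have h0 := hkmem.2
      rw [hA _ hle] at h0
      have := hpos (kOf m ε) hkmem.1 (by omega)
      omega
    omega
  refine ⟨hmem, ?_⟩
  funext i
  have hi := i.isLt
  simp only [fmap]
  rw [hkOf, show t + 1 - 1 = t by omega]
  by_cases h1 : (i : ℕ) < t
  · rw [if_pos h1]
    exact hg_lo i h1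
  · rw [if_neg h1]
    by_cases h2 : (i : ℕ) = 2 * m - 1
    · rw [dif_pos h2]
      have hval := eps_eq_one_of_zero ε' hnn (show 1 ≤ 2 * m by omega) le_rfl hend
      have hieq : i = ⟨2 * m - 1, by omega⟩ := Fin.ext (by simpa using h2)
      rw [hieq, hval]
    · rw [dif_neg h2]
      have hv1 : (i : ℕ) + 1 < 2 * m := by omega
      have hv2 : (i : ℕ) + 1 - 1 < 2 * m := by omega
      have := hg_hi ((i : ℕ) + 1) hv1 hv2 (by omega)
      rw [this]
      congr 1
end HumpAux

/-- For every `m ≥ 2`, the number of leading humps of order `m` and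
generation `2` equals the number of those of order `m` and generation `1`. -/
theorem card_H2_two_eq_one (m : ℕ) (hm : 2 ≤ m) :
    (H2 m 2).card = (H2 m 1).card := by
  exact Finset.card_nbij' (HumpAux.fmap m) (HumpAux.gmap m)
    (fun ε hε => (HumpAux.fmap_good hm hε).1)
    (fun ε' hε' => (HumpAux.gmap_good hm hε').1)
    (fun ε hε => (HumpAux.fmap_good hm hε).2)
    (fun ε' hε' => (HumpAux.gmap_good hm hε').2)
end

section
/- For every even integer r ≥ 2 and all m, n ≥ 1, card(Ĥ^r_{m,n}) = (r/2)^{2m−n} · card(Ĥ²_{m,n}). -/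
open scoped Classical

/-- For a string `ε` of length `N` over `{0, …, r−1}`, `Dr ε j` is
`#{i ≤ j : ε_i < r/2} − #{i ≤ j : ε_i ≥ r/2}` over the first `j` entries. -/
def Dr {r N : ℕ} (ε : Fin N → Fin r) (j : ℕ) : ℤ :=
  ((Finset.univ.filter fun i : Fin N => (i : ℕ) < j ∧ 2 * (ε i : ℕ) < r).card : ℤ) -
    ((Finset.univ.filter fun i : Fin N => (i : ℕ) < j ∧ r ≤ 2 * (ε i : ℕ)).card : ℤ)

/-- `Ĥ^r_{m,n}`: strings `ε₁⋯ε_{2m}` over `{0, …, r−1}` with `D_j ≥ 0` for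
all `j ≤ 2m`, `D_{2m} = 0`, `ε_j = r/2` whenever `D_j = 0`, and exactly `n`
indices `j` with `D_j = 0`. -/
noncomputable def Hr (r m n : ℕ) : Finset (Fin (2 * m) → Fin r) :=
  Finset.univ.filter fun ε =>
    (∀ j, 1 ≤ j → j ≤ 2 * m → 0 ≤ Dr ε j) ∧ Dr ε (2 * m) = 0 ∧
    (∀ j (hj : 1 ≤ j) (hj' : j ≤ 2 * m), Dr ε j = 0 →
      2 * ((ε ⟨j - 1, by omega⟩ : ℕ)) = r) ∧
    ((Finset.Icc 1 (2 * m)).filter fun j => Dr ε j = 0).card = n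

/-- Threshold map from `{0,…,r−1}` strings to binary strings. -/
noncomputable def toBin {r N : ℕ} (ε : Fin N → Fin r) : Fin N → Fin 2 :=
  fun i => if 2 * (ε i : ℕ) < r then 0 else 1

lemma D2_toBin {r N : ℕ} (ε : Fin N → Fin r) (j : ℕ) :
    D2 (toBin ε) j = Dr ε j := by
  unfold D2 Dr
  have h1 : (Finset.univ.filter fun i : Fin N => (i : ℕ) < j ∧ toBin ε i = 0)
      = Finset.univ.filter fun i : Fin N => (i : ℕ) < j ∧ 2 * (ε i : ℕ) < r := by
    ext i
    simp only [Finset.mem_filter, Finset.mem_univ, true_and]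
    simp only [toBin]
    constructor
    · rintro ⟨h1, h2⟩
      refine ⟨h1, ?_⟩
      by_contra h
      simp [h] at h2
    · rintro ⟨h1, h2⟩
      exact ⟨h1, by simp [h2]⟩
  have h2 : (Finset.univ.filter fun i : Fin N => (i : ℕ) < j ∧ toBin ε i = 1)
      = Finset.univ.filter fun i : Fin N => (i : ℕ) < j ∧ r ≤ 2 * (ε i : ℕ) := by
    ext i
    simp only [Finset.mem_filter, Finset.mem_univ, true_and]
    simp only [toBin]
    constructor
    · rintro ⟨h1, h2⟩
      refine ⟨h1, ?_⟩
      by_contra h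
      push_neg at h
      simp [h] at h2
    · rintro ⟨h1, h2⟩
      refine ⟨h1, by simp [Nat.not_lt.mpr h2]⟩
  rw [h1, h2]

lemma card_filter_lt_half {r : ℕ} (hr : 2 ≤ r) (hre : Even r) :
    (Finset.univ.filter fun v : Fin r => 2 * (v : ℕ) < r).card = r / 2 := by
  obtain ⟨k, hk⟩ := id hre
  have hk2 : r = 2 * k := by omega
  have : (Finset.univ.filter fun v : Fin r => 2 * (v : ℕ) < r)
      = Finset.Iio (⟨r / 2, by omega⟩ : Fin r) := by
    ext v
    simp only [Finset.mem_filter, Finset.mem_univ, true_and, Finset.mem_Iio,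
      Fin.lt_def]
    omega
  rw [this, Fin.card_Iio]

lemma card_filter_ge_half {r : ℕ} (hr : 2 ≤ r) (hre : Even r) :
    (Finset.univ.filter fun v : Fin r => ¬ 2 * (v : ℕ) < r).card = r / 2 := by
  have h := Finset.card_filter_add_card_filter_not
    (s := (Finset.univ : Finset (Fin r))) (p := fun v : Fin r => 2 * (v : ℕ) < r)
  rw [card_filter_lt_half hr hre, Finset.card_univ, Fintype.card_fin] at h
  obtain ⟨k, hk⟩ := hre
  omega

/-- For every even `r ≥ 2` and all `m, n ≥ 1`,
`card(Ĥ^r_{m,n}) = (r/2)^{2m−n} · card(Ĥ²_{m,n})`. -/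
theorem card_Hr_eq (r m n : ℕ) (hr : 2 ≤ r) (hre : Even r)
    (hm : 1 ≤ m) (hn : 1 ≤ n) :
    (Hr r m n).card = (r / 2) ^ (2 * m - n) * (H2 m n).card := by
  classical
  obtain ⟨k, hk⟩ := id hre
  have hk2 : r = 2 * k := by omega
  have hhalf : r / 2 = k := by omega
  have halflt : r / 2 < r := by omega
  -- the half element
  set hf : Fin r := ⟨r / 2, halflt⟩ with hhf
  -- fiber sets
  set S : (Fin (2 * m) → Fin 2) → Fin (2 * m) → Finset (Fin r) :=
    fun δ i => if D2 δ ((i : ℕ) + 1) = 0 then {hf}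
      else Finset.univ.filter fun v : Fin r => (2 * (v : ℕ) < r ↔ δ i = 0) with hS
  -- toBin maps Hr into H2
  have hmap : ∀ ε ∈ Hr r m n, toBin ε ∈ H2 m n := by
    intro ε hε
    simp only [Hr] at hε
    simp only [Finset.mem_filter, Finset.mem_univ, true_and] at hε
    obtain ⟨h1, h2, h3, h4⟩ := hε
    simp only [H2]
    simp only [Finset.mem_filter, Finset.mem_univ, true_and]
    simp only [IsLeadingHump]
    refine ⟨⟨fun j hj hj' => ?_, ?_, fun j hj hj' hD => ?_⟩, ?_⟩
    · rw [D2_toBin]; exact h1 j hj hj'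
    · rw [D2_toBin]; exact h2
    · rw [D2_toBin] at hD
      have := h3 j hj hj' hD
      simp only [toBin]
      rw [if_neg (by omega)]
    · rw [← h4]
      congr 1
      apply Finset.filter_congr
      intro j _
      rw [D2_toBin]
  have key : ∀ δ ∈ H2 m n,
      ((Hr r m n).filter fun ε => toBin ε = δ) = Fintype.piFinset (S δ) := by
    intro δ hδ
    simp only [H2] at hδ
    simp only [Finset.mem_filter, Finset.mem_univ, true_and] at hδ
    simp only [IsLeadingHump] at hδ
    obtain ⟨⟨g1, g2, g3⟩, g4⟩ := hδ
    ext ε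
    simp only [Hr, hS]
    simp only [Finset.mem_filter, Fintype.mem_piFinset, Finset.mem_univ,
      true_and]
    constructor
    · rintro ⟨⟨h1, h2, h3, h4⟩, hb⟩
      intro i
      by_cases hz : D2 δ ((i : ℕ) + 1) = 0
      · rw [if_pos hz]
        have hD : Dr ε ((i : ℕ) + 1) = 0 := by
          rw [← D2_toBin, hb]; exact hz
        have := h3 ((i : ℕ) + 1) (by omega) (by omega) hD
        simp only [Nat.add_sub_cancel] at this
        rw [Fin.eta] at this
        simp only [Finset.mem_singleton]
        apply Fin.ext
        simp only [hhf]
        omega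
      · rw [if_neg hz]
        simp only [Finset.mem_filter, Finset.mem_univ, true_and]
        rw [← hb]
        simp only [toBin]
        constructor
        · intro hlt
          rw [if_pos hlt]
        · intro h0
          by_contra h
          rw [if_neg h] at h0
          simp at h0
    · intro hi
      have hball : ∀ i : Fin (2 * m), toBin ε i = δ i := by
        intro i
        have := hi i
        by_cases hz : D2 δ ((i : ℕ) + 1) = 0
        · rw [if_pos hz] at this
          simp only [Finset.mem_singleton] at this
          have hd1 : δ i = 1 := by
            have := g3 ((i : ℕ) + 1) (by omega) (by omega) hz
            simpa using this
          rw [hd1]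
          simp only [toBin, this, hhf]
          rw [if_neg (by simp; omega)]
        · rw [if_neg hz] at this
          simp only [Finset.mem_filter, Finset.mem_univ, true_and] at this
          simp only [toBin]
          by_cases hlt : 2 * (ε i : ℕ) < r
          · rw [if_pos hlt, (this.mp hlt).symm]
          · rw [if_neg hlt]
            have : ¬ δ i = 0 := fun h => hlt (this.mpr h)
            omega
      have hb : toBin ε = δ := funext hball
      have hDeq : ∀ j, Dr ε j = D2 δ j := by
        intro j
        rw [← D2_toBin, hb]
      refine ⟨⟨fun j hj hj' => ?_, ?_, fun j hj hj' hD => ?_, ?_⟩, hb⟩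
      · rw [hDeq]; exact g1 j hj hj'
      · rw [hDeq]; exact g2
      · rw [hDeq] at hD
        have hi' := hi ⟨j - 1, by omega⟩
        have hz : D2 δ ((j - 1 : ℕ) + 1) = 0 := by
          have : (j - 1) + 1 = j := by omega
          rw [this]; exact hD
        rw [if_pos hz] at hi'
        simp only [Finset.mem_singleton] at hi'
        rw [hi']
        simp only [hhf]
        omega
      · rw [← g4]
        congr 1
        apply Finset.filter_congr
        intro j _
        rw [hDeq]
  -- count zero positions: exactly n indices
  have hzero : ∀ δ ∈ H2 m n,
      (Finset.univ.filter fun i : Fin (2 * m) => D2 δ ((i : ℕ) + 1) = 0).card = n := by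
    intro δ hδ
    simp only [H2, Finset.mem_filter, Finset.mem_univ, true_and] at hδ
    rw [← hδ.2]
    refine Finset.card_bij (fun i _ => (i : ℕ) + 1) ?_ ?_ ?_
    · intro i hi
      simp only [Finset.mem_filter, Finset.mem_univ, true_and] at hi
      simp only [Finset.mem_filter, Finset.mem_Icc]
      exact ⟨⟨by omega, by omega⟩, hi⟩
    · intro i _ i' _ h
      apply Fin.ext
      omega
    · intro j hj
      simp only [Finset.mem_filter, Finset.mem_Icc] at hj
      refine ⟨⟨j - 1, by omega⟩, ?_, by simp only; omega⟩
      simp only [Finset.mem_filter, Finset.mem_univ, true_and]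
      have : (j - 1) + 1 = j := by omega
      rw [this]
      exact hj.2
  -- fiber cardinality
  have hfib : ∀ δ ∈ H2 m n,
      (Fintype.piFinset (S δ)).card = (r / 2) ^ (2 * m - n) := by
    intro δ hδ
    rw [Fintype.card_piFinset]
    have hcard : ∀ i : Fin (2 * m),
        (S δ i).card = if D2 δ ((i : ℕ) + 1) = 0 then 1 else r / 2 := by
      intro i
      simp only [hS]
      by_cases hz : D2 δ ((i : ℕ) + 1) = 0
      · rw [if_pos hz, if_pos hz, Finset.card_singleton]
      · rw [if_neg hz, if_neg hz]
        by_cases hd : δ i = 0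
        · have : (Finset.univ.filter fun v : Fin r => (2 * (v : ℕ) < r ↔ δ i = 0))
              = Finset.univ.filter fun v : Fin r => 2 * (v : ℕ) < r := by
            apply Finset.filter_congr
            intro v _
            simp [hd]
          rw [this, card_filter_lt_half hr hre]
        · have : (Finset.univ.filter fun v : Fin r => (2 * (v : ℕ) < r ↔ δ i = 0))
              = Finset.univ.filter fun v : Fin r => ¬ 2 * (v : ℕ) < r := by
            apply Finset.filter_congr
            intro v _
            simp [hd]
          rw [this, card_filter_ge_half hr hre]
    calc (∏ i : Fin (2 * m), (S δ i).card)
        = ∏ i : Fin (2 * m), (if D2 δ ((i : ℕ) + 1) = 0 then 1 else r / 2) := by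
          exact Finset.prod_congr rfl fun i _ => hcard i
      _ = (r / 2) ^ (2 * m - n) := by
          rw [Finset.prod_ite]
          simp only [Finset.prod_const_one, Finset.prod_const, one_mul]
          congr 1
          have htot := Finset.card_filter_add_card_filter_not
            (s := (Finset.univ : Finset (Fin (2 * m))))
            (p := fun i : Fin (2 * m) => D2 δ ((i : ℕ) + 1) = 0)
          rw [hzero δ hδ, Finset.card_univ, Fintype.card_fin] at htot
          omega
  rw [Finset.card_eq_sum_card_fiberwise hmap]
  rw [Finset.sum_congr rfl fun δ hδ => by rw [key δ hδ, hfib δ hδ]]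
  rw [Finset.sum_const, smul_eq_mul, mul_comm]
end
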